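/- arXiv:0906.1166 — 7 statements merged into one kernel-verified Lean document; each statement's English description precedes it below -/
import Mathlib

section
/- Let N be a rooted DAG with root r, and let u -> ... -> v be a tree path. Then v is a strict descendant of u, i.e., every directed path from r to v contains u. -/
/-- A walk in a directed graph `E` given by its (nonempty) list of vertices,
from `u` to `v`. -/
def IsWalk {V : Type*} (E : V → V → Prop) (l : List V) (u v : V) : Prop :=
  l.Chain' E ∧ l.head? = some u ∧ l.getLast? = some v

/-- In-degree of a node. -/
noncomputable def inDeg {V : Type*} [Fintype V] (E : V → V → Prop) (v : V) : ℕ :=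
  Nat.card {u // E u v}

/-- Out-degree of a node. -/
noncomputable def outDeg {V : Type*} [Fintype V] (E : V → V → Prop) (v : V) : ℕ :=
  Nat.card {w // E v w}

/-- The cluster of a node: the set of leaves (out-degree 0 nodes) that are
descendants of it. -/
noncomputable def cluster {V : Type*} [Fintype V] (E : V → V → Prop) (v : V) : Set V :=
  {l | outDeg E l = 0 ∧ Relation.ReflTransGen E v l}

/-- The intermediate (internal) nodes of a walk. -/
def internals {V : Type*} (l : List V) : List V := l.tail.dropLast

/-- The arcs of a walk. -/
def arcsOf {V : Type*} (l : List V) : List (V × V) := l.zip l.tail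

/-- A reticulation cycle with split node `x` and hybrid end `h`, consisting of the
two internally disjoint merge paths `p` and `q`. -/
def RetCycleAt {V : Type*} (E : V → V → Prop) (x h : V) (p q : List V) : Prop :=
  IsWalk E p x h ∧ IsWalk E q x h ∧ p ≠ q ∧ ∀ y ∈ internals p, y ∉ internals q

/-- A network is 1-nested when every pair of distinct reticulation cycles (for hybrid
nodes) have disjoint sets of arcs. -/
noncomputable def OneNested {V : Type*} [Fintype V] (E : V → V → Prop) : Prop :=
  ∀ x h p q x' h' p' q', 2 ≤ inDeg E h → 2 ≤ inDeg E h' →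
    RetCycleAt E x h p q → RetCycleAt E x' h' p' q' →
    ¬ (x = x' ∧ h = h' ∧ ({p, q} : Set (List V)) = {p', q'}) →
    ∀ a ∈ arcsOf p ++ arcsOf q, a ∉ arcsOf p' ++ arcsOf q'


lemma walk_rtg {V : Type*} {E : V → V → Prop} :
    ∀ (l : List V) {a b : V}, l.Chain' E → l.head? = some a → l.getLast? = some b →
      Relation.ReflTransGen E a b
  | [], a, b, _, h, _ => by simp at h
  | [x], a, b, _, h1, h2 => by
      simp at h1 h2; subst h1; subst h2; exact .refl
  | x :: y :: t, a, b, hc, h1, h2 => by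
      simp only [List.head?_cons, Option.some.injEq] at h1; subst h1
      unfold List.Chain' at hc; rw [List.isChain_cons_cons] at hc
      have := walk_rtg (y :: t) hc.2 rfl (by simpa using h2)
      exact Relation.ReflTransGen.head hc.1 this

theorem stmt3' {V : Type*} [Fintype V] (E : V → V → Prop) (r : V)
    (hacyc : ∀ v, ¬ Relation.TransGen E v v)
    (hroot : ∀ v, Relation.ReflTransGen E r v)
    (u : V) (p : List V) :
    ∀ (v : V), (IsWalk E p u v) → (∀ x ∈ p.tail, inDeg E x ≤ 1) →
    ∀ l : List V, IsWalk E l r v → u ∈ l := by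
  induction p using List.reverseRecOn with
  | nil => intro v hp; simp [IsWalk] at hp
  | append_singleton p' v' ih =>
    intro v hp htree l hl
    obtain ⟨hc, hh, hlast⟩ := hp
    rw [List.getLast?_concat] at hlast
    have hv : v' = v := by simpa using hlast
    subst v'
    rcases p' with _ | ⟨c, t⟩
    · obtain rfl : u = v := by simpa using hh.symm
      obtain ⟨h2, h3⟩ := List.mem_getLast?_eq_getLast hl.2.2
      rw [h3]; exact List.getLast_mem h2
    · set w := (c :: t).getLast (by simp) with hw
      have hwlast : (c :: t).getLast? = some w := List.getLast?_eq_getLast _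
      have hu : u = c := by simpa using hh.symm
      unfold List.Chain' at hc; rw [List.isChain_append] at hc
      have hEwv : E w v := hc.2.2 w hwlast v rfl
      have hp' : IsWalk E (c :: t) u w := ⟨hc.1, by simp [hu], hwlast⟩
      have htree' : ∀ x ∈ (c :: t).tail, inDeg E x ≤ 1 := by
        intro x hx
        exact htree x (by simp at hx ⊢; exact Or.inl hx)
      have hvdeg : inDeg E v ≤ 1 := htree v (by simp)
      have hruw : Relation.ReflTransGen E r w :=
        (hroot u).trans (walk_rtg _ hp'.1 hp'.2.1 hp'.2.2)
      obtain ⟨hcl, hhl, hlastl⟩ := hl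
      rcases List.eq_nil_or_concat l with rfl | ⟨l', a, rfl⟩
      · simp at hlastl
      simp only [List.concat_eq_append] at hcl hhl hlastl ⊢
      rw [List.getLast?_concat] at hlastl
      have hav : a = v := by simpa using hlastl
      subst a
      rcases l' with _ | ⟨d, s⟩
      · have hrv : r = v := by simpa using hhl.symm
        rw [hrv] at hruw
        exact (hacyc v (Relation.TransGen.tail' hruw hEwv)).elim
      · set y := (d :: s).getLast (by simp) with hy
        have hylast : (d :: s).getLast? = some y := List.getLast?_eq_getLast _
        unfold List.Chain' at hcl; rw [List.isChain_append] at hcl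
        have hEyv : E y v := hcl.2.2 y hylast v rfl
        have hss : Subsingleton {z // E z v} := by
          rw [← Finite.card_le_one_iff_subsingleton]
          exact hvdeg
        have hyw : y = w := by
          have := @Subsingleton.elim _ hss ⟨y, hEyv⟩ ⟨w, hEwv⟩
          simpa using congrArg Subtype.val this
        have hrd : r = d := by simpa using hhl.symm
        have hl' : IsWalk E (d :: s) r w := ⟨hcl.1, by simp [hrd], by rw [hylast, hyw]⟩
        have hul := ih w hp' htree' (d :: s) hl'
        simp at hul ⊢
        tauto

/-- If there is a tree path from `u` to `v` in a rooted DAG with root `r`, then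
`v` is a strict descendant of `u`: every directed path from `r` to `v`
contains `u`. -/
theorem stmt3 {V : Type*} [Fintype V] (E : V → V → Prop) (r : V)
    (hacyc : ∀ v, ¬ Relation.TransGen E v v)
    (hroot : ∀ v, Relation.ReflTransGen E r v)
    (u v : V) (p : List V) (hp : IsWalk E p u v)
    (htree : ∀ x ∈ p.tail, inDeg E x ≤ 1) :
    ∀ l : List V, IsWalk E l r v → u ∈ l :=
  stmt3' E r hacyc hroot u p v hp htree
end

section
/- Let N be a tree-child rooted DAG, meaning every internal (non-leaf) node has at least one child of in-degree at most 1. Then every node of N has a descendant leaf reachable by a tree path (a path all of whose arcs end in nodes of in-degree at most 1); in particular every node has a strict descendant leaf. -/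
private lemma mem_of_getLast?_aux {V : Type*} {l : List V} {v : V}
    (h : l.getLast? = some v) : v ∈ l := by
  cases l with
  | nil => simp at h
  | cons a t =>
    have hne : a :: t ≠ [] := by simp
    rw [List.getLast?_eq_getLast hne] at h
    exact (Option.some_inj.1 h) ▸ List.getLast_mem hne

private lemma pred_mem {V : Type*} {E : V → V → Prop} :
    ∀ (l : List V) (w : V), l.Chain' E → w ∈ l → l.head? ≠ some w →
      ∃ u ∈ l, E u w
  | [], w, _, hw, _ => by simp at hw
  | [a], w, _, hw, hh => by
    simp at hw hh; exact absurd hw.symm hh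
  | a :: b :: rest', w, hch, hw, hh => by
    have hwa : w ≠ a := fun h => hh (by simp [h])
    have hwr : w ∈ b :: rest' := by
      rcases List.mem_cons.1 hw with h | h
      · exact absurd h hwa
      · exact h
    have hEab : E a b := (List.isChain_cons_cons.1 hch).1
    have hch' : (b :: rest').Chain' E := (List.isChain_cons_cons.1 hch).2
    by_cases hwb : w = b
    · exact ⟨a, by simp, hwb ▸ hEab⟩
    · obtain ⟨u, hu, hEu⟩ := pred_mem (b :: rest') w hch' hwr
        (by simp [Ne.symm hwb])
      exact ⟨u, List.mem_cons_of_mem _ hu, hEu⟩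

/-- In a tree-child rooted DAG (every non-leaf node has some child of in-degree at
most 1), every node has a descendant leaf reachable by a tree path; in particular
this leaf is a strict descendant of the node. -/
theorem stmt4 {V : Type*} [Fintype V] (E : V → V → Prop) (r : V)
    (hacyc : ∀ v, ¬ Relation.TransGen E v v)
    (hroot : ∀ v, Relation.ReflTransGen E r v)
    (htc : ∀ v, (∃ w, E v w) → ∃ w, E v w ∧ inDeg E w ≤ 1) :
    ∀ v : V, ∃ (lf : V) (p : List V),
      outDeg E lf = 0 ∧ IsWalk E p v lf ∧ (∀ x ∈ p.tail, inDeg E x ≤ 1) ∧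
      (∀ q : List V, IsWalk E q r lf → v ∈ q) := by
  classical
  haveI : IsTrans V (fun a b => Relation.TransGen E b a) :=
    ⟨fun _ _ _ h1 h2 => h2.trans h1⟩
  haveI : IsIrrefl V (fun a b => Relation.TransGen E b a) :=
    ⟨fun a h => hacyc a h⟩
  have wf : WellFounded (fun a b : V => E b a) :=
    Subrelation.wf (fun h => Relation.TransGen.single h)
      (Finite.wellFounded_of_trans_of_irrefl (fun a b => Relation.TransGen E b a))
  intro v
  induction v using wf.induction with
  | _ v ih =>
  by_cases hleaf : outDeg E v = 0
  · refine ⟨v, [v], hleaf, ⟨List.isChain_singleton _, by simp, by simp⟩, by simp, ?_⟩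
    intro q hq
    exact mem_of_getLast?_aux hq.2.2
  · have hne : ∃ w, E v w := by
      by_contra h
      push_neg at h
      have : IsEmpty {w // E v w} := ⟨fun ⟨w, hw⟩ => h w hw⟩
      exact hleaf (by simp [outDeg, Nat.card_of_isEmpty])
    obtain ⟨w, hvw, hwdeg⟩ := htc v hne
    obtain ⟨lf, p, hlfleaf, ⟨hchain, hhead, hlast⟩, htree, hstrict⟩ := ih w hvw
    obtain ⟨a, t, rfl⟩ : ∃ a t, p = a :: t := by
      cases p with
      | nil => simp at hhead
      | cons a t => exact ⟨a, t, rfl⟩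
    have haw : a = w := by simpa using hhead
    subst haw
    refine ⟨lf, v :: a :: t, hlfleaf, ⟨?_, by simp, ?_⟩, ?_, ?_⟩
    · exact List.isChain_cons_cons.2 ⟨hvw, hchain⟩
    · rw [List.getLast?_cons_cons]; exact hlast
    · intro x hx
      simp only [List.tail_cons] at hx
      rcases List.mem_cons.1 hx with h | h
      · exact h ▸ hwdeg
      · exact htree x h
    · intro q hq
      have hwq : a ∈ q := hstrict q hq
      have hwr : a ≠ r := by
        intro h
        exact hacyc r (Relation.TransGen.tail' (hroot v) (h ▸ hvw))
      obtain ⟨u, huq, hEu⟩ := pred_mem q a hq.1 hwq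
        (by rw [hq.2.1]; simp [Ne.symm hwr])
      have : u = v := by
        have hsub : Subsingleton {u // E u a} :=
          Finite.card_le_one_iff_subsingleton.1 hwdeg
        have := hsub.allEq ⟨u, hEu⟩ ⟨v, hvw⟩
        simpa using congrArg Subtype.val this
      exact this ▸ huq
end

section
/- Let N be a rooted DAG in which every node has at most 2 parents. If i and j are two leaves such that every internal node whose cluster contains i also contains j and vice versa, then i and j are siblings (they share a common parent). -/
/-- In a rooted DAG in which every node has at most 2 parents, if `i` and `j` are
two leaves such that every internal node whose cluster contains one of them also
contains the other, then `i` and `j` are siblings. -/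
theorem stmt8 {V : Type*} [Fintype V] (E : V → V → Prop) (r : V)
    (hacyc : ∀ v, ¬ Relation.TransGen E v v)
    (hroot : ∀ v, Relation.ReflTransGen E r v)
    (hdeg : ∀ v, inDeg E v ≤ 2)
    (i j : V) (hij : i ≠ j)
    (hi : outDeg E i = 0) (hj : outDeg E j = 0)
    (hcl : ∀ v, (∃ w, E v w) → (i ∈ cluster E v ↔ j ∈ cluster E v)) :
    ∃ p, E p i ∧ E p j := by
  -- leaves have no outgoing edges
  have leaf_no_out : ∀ v, outDeg E v = 0 → ∀ w, ¬ E v w := by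
    intro v hv w hw
    have : Nat.card {w // E v w} ≠ 0 := by
      have : Nonempty {w // E v w} := ⟨⟨w, hw⟩⟩
      simpa using Nat.card_pos.ne'
    exact this hv
  have hi' := leaf_no_out i hi
  have hj' := leaf_no_out j hj
  -- leaves can't reach other vertices
  have leaf_reach : ∀ v w, outDeg E v = 0 → Relation.ReflTransGen E v w → w = v := by
    intro v w hv h
    rcases Relation.ReflTransGen.cases_head h with h | ⟨c, hc, _⟩
    · exact h.symm
    · exact absurd hc (leaf_no_out v hv c)
  -- the cluster condition, reformulated
  have hreach : ∀ v, (∃ w, E v w) → Relation.ReflTransGen E v j →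
      Relation.ReflTransGen E v i := by
    intro v hv hvj
    have := (hcl v hv).mpr ⟨hj, hvj⟩
    exact this.2
  have hreach' : ∀ v, (∃ w, E v w) → Relation.ReflTransGen E v i →
      Relation.ReflTransGen E v j := by
    intro v hv hvi
    have := (hcl v hv).mp ⟨hi, hvi⟩
    exact this.2
  -- i has a parent
  have hri : Relation.ReflTransGen E r i := hroot i
  have hrne : r ≠ i := by
    rintro rfl
    rcases Relation.ReflTransGen.cases_head (hroot j) with h | ⟨c, hc, _⟩
    · exact hij h
    · exact hi' c hc
  obtain ⟨p0, _, hp0⟩ : ∃ c, Relation.ReflTransGen E r c ∧ E c i := by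
    rcases Relation.ReflTransGen.cases_tail hri with h | h
    · exact absurd h.symm hrne
    · exact h
  -- well-foundedness of the reverse strict reachability
  have htrans : Transitive (fun a b : V => Relation.TransGen E b a) :=
    fun a b c hab hbc => Relation.TransGen.trans hbc hab
  have hirrefl : Irreflexive (fun a b : V => Relation.TransGen E b a) :=
    fun a h => hacyc a h
  have hwf : WellFounded (fun a b : V => Relation.TransGen E b a) := by
    haveI : IsTrans V (fun a b : V => Relation.TransGen E b a) := ⟨htrans⟩
    haveI : IsIrrefl V (fun a b : V => Relation.TransGen E b a) := ⟨hirrefl⟩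
    exact Finite.wellFounded_of_trans_of_irrefl _
  -- pick a deepest parent p of i
  obtain ⟨p, hp, hmin⟩ := hwf.has_min {p | E p i} ⟨p0, hp0⟩
  refine ⟨p, hp, ?_⟩
  -- p reaches j
  have hpj : Relation.ReflTransGen E p j :=
    hreach' p ⟨i, hp⟩ (Relation.ReflTransGen.single hp)
  have hpne : p ≠ j := by
    rintro rfl
    exact hj' i hp
  obtain ⟨c, hpc, hcj⟩ : ∃ c, E p c ∧ Relation.ReflTransGen E c j := by
    rcases Relation.ReflTransGen.cases_head hpj with h | h
    · exact absurd h hpne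
    · exact h
  by_cases hcjeq : c = j
  · exact hcjeq ▸ hpc
  · -- c is internal and reaches j, hence reaches i; so some deeper parent of i exists
    obtain ⟨d, hcd, _⟩ : ∃ d, E c d ∧ Relation.ReflTransGen E d j := by
      rcases Relation.ReflTransGen.cases_head hcj with h | h
      · exact absurd h hcjeq
      · exact h
    have hci : Relation.ReflTransGen E c i := hreach c ⟨d, hcd⟩ hcj
    have hcne : c ≠ i := by
      rintro rfl
      exact hi' d hcd
    obtain ⟨q, hcq, hqi⟩ : ∃ q, Relation.ReflTransGen E c q ∧ E q i := by
      rcases Relation.ReflTransGen.cases_tail hci with h | h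
      · exact absurd h.symm hcne
      · exact h
    exact absurd (Relation.TransGen.head' hpc hcq) (hmin q hqi)
end

section
/- Let N be a rooted DAG with root r. If a node v is a descendant of a node u but not a strict descendant (some path from r to v avoids u), then there exists a hybrid node h (in-degree ≥ 2) that is a strict ancestor of v and a reticulation cycle for h (two internally disjoint paths from a common origin x to h) in which u is an intermediate node of one of the two paths. -/
set_option maxHeartbeats 1000000

namespace Stmt9

variable {V : Type*} {E : V → V → Prop}

lemma chain'_transGen_of_mem_tail {a b : V} {l : List V}
    (hc : List.Chain' E (a :: l)) (hb : b ∈ l) : Relation.TransGen E a b := by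
  induction l generalizing a with
  | nil => cases hb
  | cons c l ih =>
    have hac : E a c := (List.isChain_cons_cons.mp hc).1
    rcases List.mem_cons.mp hb with rfl | hb
    · exact Relation.TransGen.single hac
    · exact Relation.TransGen.head hac (ih (List.isChain_cons_cons.mp hc).2 hb)

lemma chain'_append_disjoint (hacyc : ∀ w, ¬ Relation.TransGen E w w)
    {A B : List V} (hc : List.Chain' E (A ++ B)) :
    ∀ y, y ∈ A → y ∈ B → False := by
  intro y hyA hyB
  obtain ⟨s, t, rfl⟩ := List.append_of_mem hyA
  have h1 : List.Chain' E (s ++ y :: (t ++ B)) := by simpa [List.append_assoc] using hc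
  have h2 : List.Chain' E (y :: (t ++ B)) := (List.isChain_split.mp h1).2
  exact hacyc y (chain'_transGen_of_mem_tail h2 (by simp [hyB]))

lemma chain'_middle_transGen {A B : List V} {c d : V}
    (hc : List.Chain' E (A ++ c :: B)) (hd : d ∈ B) : Relation.TransGen E c d :=
  chain'_transGen_of_mem_tail (List.isChain_split.mp hc).2 hd

lemma exists_first_split (S : V → Prop) (l : List V) (h : ∃ y ∈ l, S y) :
    ∃ l₁ c l₂, l = l₁ ++ c :: l₂ ∧ S c ∧ ∀ y ∈ l₁, ¬ S y := by
  classical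
  induction l with
  | nil => simp at h
  | cons a l ih =>
    by_cases hSa : S a
    · exact ⟨[], a, l, rfl, hSa, by simp⟩
    · have h' : ∃ y ∈ l, S y := by
        rcases h with ⟨y, hy, hSy⟩
        rcases List.mem_cons.mp hy with rfl | hy
        · exact absurd hSy hSa
        · exact ⟨y, hy, hSy⟩
      obtain ⟨l₁, c, l₂, heq, hc, hl₁⟩ := ih h'
      refine ⟨a :: l₁, c, l₂, by rw [heq]; rfl, hc, ?_⟩
      intro y hy
      rcases List.mem_cons.mp hy with rfl | hy
      · exact hSa
      · exact hl₁ y hy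

lemma exists_last_split (S : V → Prop) (l : List V) (h : ∃ y ∈ l, S y) :
    ∃ l₁ c l₂, l = l₁ ++ c :: l₂ ∧ S c ∧ ∀ y ∈ l₂, ¬ S y := by
  classical
  induction l with
  | nil => simp at h
  | cons a l ih =>
    by_cases hl : ∃ y ∈ l, S y
    · obtain ⟨l₁, c, l₂, heq, hc, h₂⟩ := ih hl
      exact ⟨a :: l₁, c, l₂, by rw [heq]; rfl, hc, h₂⟩
    · have hSa : S a := by
        rcases h with ⟨y, hy, hSy⟩
        rcases List.mem_cons.mp hy with rfl | hy
        · exact hSy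
        · exact absurd ⟨y, hy, hSy⟩ hl
      exact ⟨[], a, l, rfl, hSa, fun y hy hSy => hl ⟨y, hy, hSy⟩⟩

lemma head?_append_cons (l : List V) (a : V) (t t' : List V) :
    (l ++ a :: t).head? = (l ++ a :: t').head? := by
  cases l <;> simp

lemma head?_of_append {A B : List V} {a : V} (h : (A ++ B).head? = some a) (hA : A ≠ []) :
    A.head? = some a := by
  cases A with
  | nil => exact absurd rfl hA
  | cons c t => simpa using h

lemma mem_of_head? {l : List V} {a : V} (h : l.head? = some a) : a ∈ l := by
  cases l with
  | nil => simp at h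
  | cons c t => simp at h; simp [h]

lemma mem_of_getLast? {l : List V} {b : V} (h : l.getLast? = some b) : b ∈ l := by
  cases l with
  | nil => simp at h
  | cons c l =>
    have hne : (c :: l) ≠ ([] : List V) := by simp
    rw [List.getLast?_eq_getLast_of_ne_nil hne] at h
    have := List.getLast_mem hne
    simp at h
    rwa [h] at this

lemma isWalk_ne_nil {l : List V} {a b : V} (h : IsWalk E l a b) : l ≠ [] := by
  rintro rfl; simp [IsWalk] at h

lemma isWalk_last_mem {l : List V} {a b : V} (h : IsWalk E l a b) : b ∈ l :=
  mem_of_getLast? h.2.2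

lemma isWalk_eq_cons {l : List V} {a b : V} (h : IsWalk E l a b) :
    l = a :: l.tail := by
  rcases h with ⟨-, hh, -⟩
  cases l with
  | nil => simp at hh
  | cons c l => simp_all

lemma isWalk_eq_dropLast {l : List V} {a b : V} (h : IsWalk E l a b) :
    l = l.dropLast ++ [b] := by
  have hne := isWalk_ne_nil h
  have h2 := h.2.2
  rw [List.getLast?_eq_getLast_of_ne_nil hne] at h2
  have h3 : l.getLast hne = b := by simpa using h2
  rw [← h3]
  exact (List.dropLast_append_getLast hne).symm

lemma isWalk_prefix {l₁ l₂ : List V} {a b c : V} (h : IsWalk E (l₁ ++ c :: l₂) a b) :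
    IsWalk E (l₁ ++ [c]) a c := by
  refine ⟨(List.isChain_split.mp h.1).1, ?_, by simp⟩
  rw [head?_append_cons l₁ c [] l₂]
  exact h.2.1

lemma isWalk_glue {l₁ l₂ : List V} {a b c : V}
    (h₁ : IsWalk E l₁ a b) (h₂ : IsWalk E l₂ b c) :
    IsWalk E (l₁ ++ l₂.tail) a c := by
  obtain ⟨t, rfl⟩ : ∃ t, l₂ = b :: t := ⟨l₂.tail, isWalk_eq_cons h₂⟩
  cases t with
  | nil =>
    have : b = c := by simpa [IsWalk] using h₂.2.2
    subst this
    simpa using h₁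
  | cons d t =>
    have hedge : E b d := (List.isChain_cons_cons.mp h₂.1).1
    refine ⟨?_, ?_, ?_⟩
    · refine List.isChain_append.mpr ?_
      refine ⟨h₁.1, (h₂.1).tail, ?_⟩
      intro p hp q hq
      rw [h₁.2.2] at hp
      simp at hp hq
      rw [← hp, ← hq]
      exact hedge
    · show (l₁ ++ d :: t).head? = some a
      cases l₁ with
      | nil => exact absurd rfl (isWalk_ne_nil h₁)
      | cons e l =>
        have he : e = a := by simpa using h₁.2.1
        subst he
        simp
    · show (l₁ ++ d :: t).getLast? = some c
      rw [List.getLast?_append_cons]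
      have := h₂.2.2
      rwa [show b :: d :: t = [b] ++ d :: t from rfl, List.getLast?_append_cons] at this

/-- The descent step: if the current candidate `h'` is not a strict ancestor of `v`,
we can move the whole configuration strictly downwards. -/
lemma step {r u v x h' : V} {g m₁ m₂ rr p C : List V}
    (hacyc : ∀ w, ¬ Relation.TransGen E w w)
    (hW : IsWalk E (g ++ x :: m₁ ++ u :: m₂ ++ h' :: rr) r v)
    (hp : IsWalk E p x h')
    (hdisj : ∀ y ∈ p, y ∈ (g ++ x :: m₁ ++ u :: m₂ ++ h' :: rr) → y = x ∨ y = h')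
    (hC : IsWalk E C r v) (hh'C : h' ∉ C) :
    ∃ (x2 h2 : V) (g2 m₁2 m₂2 rr2 p2 : List V),
      IsWalk E (g2 ++ x2 :: m₁2 ++ u :: m₂2 ++ h2 :: rr2) r v ∧
      IsWalk E p2 x2 h2 ∧
      (∀ y ∈ p2, y ∈ (g2 ++ x2 :: m₁2 ++ u :: m₂2 ++ h2 :: rr2) → y = x2 ∨ y = h2) ∧
      Relation.TransGen E h' h2 := by
  classical
  have HC := hW.1
  -- regrouped chains
  have HCA : List.Chain' E ((g ++ x :: m₁) ++ ((u :: m₂) ++ (h' :: rr))) := by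
    have e : g ++ x :: m₁ ++ u :: m₂ ++ h' :: rr
        = (g ++ x :: m₁) ++ ((u :: m₂) ++ (h' :: rr)) := by simp
    rwa [e] at HC
  have HCB : List.Chain' E (((g ++ x :: m₁) ++ (u :: m₂)) ++ (h' :: rr)) := by
    have e : g ++ x :: m₁ ++ u :: m₂ ++ h' :: rr
        = ((g ++ x :: m₁) ++ (u :: m₂)) ++ (h' :: rr) := by simp
    rwa [e] at HC
  have HChr : List.Chain' E (h' :: rr) := (List.isChain_split.mp HCB).2
  -- basic disjointness facts on W
  have DTop : ∀ y, y ∈ (g ++ x :: m₁) ++ (u :: m₂) → y ∈ h' :: rr → False :=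
    chain'_append_disjoint hacyc HCB
  have DA : ∀ y, y ∈ g ++ x :: m₁ → y ∈ (u :: m₂) ++ (h' :: rr) → False :=
    chain'_append_disjoint hacyc HCA
  have hh'rr : h' ∉ rr := fun h =>
    hacyc h' (chain'_transGen_of_mem_tail HChr h)
  have hxgx : x ∈ g ++ x :: m₁ := by simp
  have hxM : x ∉ u :: m₂ := fun h => DA x hxgx (List.mem_append.mpr (Or.inl h))
  have hxrr : x ∉ rr := fun h =>
    DTop x (List.mem_append.mpr (Or.inl hxgx)) (by simp [h])
  have hxh' : x ≠ h' := fun h =>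
    DTop x (List.mem_append.mpr (Or.inl hxgx)) (by simp [h])
  have hh'M : h' ∉ u :: m₂ := fun h => DTop h' (List.mem_append.mpr (Or.inr h)) (by simp)
  have hh'gx : h' ∉ g ++ x :: m₁ := fun h => DA h' h (List.mem_append.mpr (Or.inr (by simp)))
  -- membership decomposition of W
  have memW : ∀ y, y ∈ g ++ x :: m₁ ++ u :: m₂ ++ h' :: rr ↔
      (y ∈ g ++ x :: m₁ ∨ y ∈ u :: m₂ ∨ y = h' ∨ y ∈ rr) := by
    intro y
    simp only [List.mem_append, List.mem_cons]
    tauto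
  -- v is in rr
  have hvC : v ∈ C := isWalk_last_mem hC
  have hlast : (h' :: rr).getLast? = some v := by
    have := hW.2.2
    rwa [show g ++ x :: m₁ ++ u :: m₂ ++ h' :: rr
        = ((g ++ x :: m₁) ++ (u :: m₂)) ++ (h' :: rr) by simp,
      List.getLast?_append_cons] at this
  have hrrne : rr ≠ [] := by
    intro h0
    rw [h0] at hlast
    simp at hlast
    exact hh'C (hlast ▸ hvC)
  have hvrr : v ∈ rr := by
    apply mem_of_getLast?
    rwa [show h' :: rr = [h'] ++ rr from rfl, List.getLast?_append_of_ne_nil _ hrrne] at hlast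
  -- head of W is r
  have hrtop : r ∈ (g ++ x :: m₁) ++ (u :: m₂) := by
    apply mem_of_head?
    apply head?_of_append (B := h' :: rr)
    · rw [show ((g ++ x :: m₁) ++ (u :: m₂)) ++ (h' :: rr)
          = g ++ x :: m₁ ++ u :: m₂ ++ h' :: rr by simp]
      exact hW.2.1
    · simp
  -- first hit of C in rr
  obtain ⟨c₁, b, c₂, hCeq, hbrr, hc₁rr⟩ :=
    exists_first_split (fun y => y ∈ rr) C ⟨v, hvC, hvrr⟩
  -- r is in c₁
  have hc₁ne : c₁ ≠ [] := by
    intro h0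
    rw [h0] at hCeq
    have hbr : b = r := by
      have := hC.2.1
      rw [hCeq] at this
      simpa using this
    exact DTop r hrtop (by simp [hbr ▸ hbrr])
  have hrc₁ : r ∈ c₁ := by
    apply mem_of_head?
    apply head?_of_append (B := b :: c₂) _ hc₁ne
    rw [← hCeq]
    exact hC.2.1
  -- last hit of c₁ in the upper region
  obtain ⟨d₁, a, d₂, hc₁eq, hUa, hd₂⟩ :=
    exists_last_split (fun y => y ∈ (g ++ x :: m₁) ++ (u :: m₂) ∨ y ∈ p.dropLast) c₁
      ⟨r, hrc₁, Or.inl hrtop⟩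
  have hCeq2 : C = d₁ ++ a :: (d₂ ++ b :: c₂) := by
    rw [hCeq, hc₁eq]; simp
  -- the corridor walk
  have hcor : IsWalk E (a :: (d₂ ++ [b])) a b := by
    have hch : List.Chain' E (a :: (d₂ ++ b :: c₂)) := by
      have := hC.1
      rw [hCeq2] at this
      exact (List.isChain_split.mp this).2
    have hch2 : List.Chain' E ((a :: d₂) ++ b :: c₂) := by
      rwa [show a :: (d₂ ++ b :: c₂) = (a :: d₂) ++ b :: c₂ by simp] at hch
    have hch3 := (List.isChain_split.mp hch2).1
    refine ⟨by simpa [List.Chain'] using hch3, by simp, ?_⟩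
    rw [show a :: (d₂ ++ [b]) = (a :: d₂) ++ [b] by simp, List.getLast?_concat]
  -- corridor members are in C
  have hd₂C : ∀ y ∈ d₂, y ∈ C := by
    intro y hy; rw [hCeq2]; simp [hy]
  have haC : a ∈ C := by rw [hCeq2]; simp
  have hd₂c₁ : ∀ y ∈ d₂, y ∈ c₁ := by
    intro y hy; rw [hc₁eq]; simp [hy]
  -- corridor avoids W
  have hd₂W : ∀ y ∈ d₂, y ∈ g ++ x :: m₁ ++ u :: m₂ ++ h' :: rr → False := by
    intro y hy hyW
    rcases (memW y).mp hyW with h1 | h1 | h1 | h1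
    · exact hd₂ y hy (Or.inl (List.mem_append.mpr (Or.inl h1)))
    · exact hd₂ y hy (Or.inl (List.mem_append.mpr (Or.inr h1)))
    · exact hh'C (h1 ▸ hd₂C y hy)
    · exact hc₁rr y (hd₂c₁ y hy) h1
  -- descent
  have htrans : Relation.TransGen E h' b := chain'_middle_transGen HCB hbrr
  -- split rr at b
  obtain ⟨r₁, r₂, hrrEq⟩ := List.append_of_mem hbrr
  have HChr2 : List.Chain' E ((h' :: r₁) ++ (b :: r₂)) := by
    have e : h' :: rr = (h' :: r₁) ++ (b :: r₂) := by rw [hrrEq]; simp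
    rwa [e] at HChr
  have Dr : ∀ y, y ∈ h' :: r₁ → y ∈ b :: r₂ → False := chain'_append_disjoint hacyc HChr2
  have hlastb : (b :: r₂).getLast? = some v := by
    have h1 := hlast
    rw [show h' :: rr = [h'] ++ rr from rfl, List.getLast?_append_of_ne_nil _ hrrne, hrrEq,
      List.getLast?_append_cons] at h1
    exact h1
  have hbC : b ∈ C := by rw [hCeq]; simp
  -- b is not x, h', nor in p
  have hbx : b ≠ x := fun h0 => hxrr (h0 ▸ hbrr)
  have hbp : b ∉ p := by
    intro h0
    rcases hdisj b h0 ((memW b).mpr (Or.inr (Or.inr (Or.inr hbrr)))) with h1 | h1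
    · exact hbx h1
    · exact hh'C (h1 ▸ hbC)
  -- membership in p decomposes
  have hmemp : ∀ y ∈ p, y ∈ p.dropLast ∨ y = h' := by
    intro y hy
    have := isWalk_eq_dropLast hp
    rw [this] at hy
    simpa using hy
  have hh'pd : h' ∉ p.dropLast := by
    intro h0
    have hc := hp.1
    rw [isWalk_eq_dropLast hp] at hc
    exact chain'_append_disjoint hacyc hc h' h0 (by simp)
  -- p misses various regions
  have hpM : ∀ y ∈ p, y ∈ u :: m₂ → False := by
    intro y hy hy2
    rcases hdisj y hy ((memW y).mpr (Or.inr (Or.inl hy2))) with h1 | h1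
    · subst h1; exact hxM hy2
    · subst h1; exact hh'M hy2
  have hprr : ∀ y ∈ p, y ∈ rr → False := by
    intro y hy hy2
    rcases hdisj y hy ((memW y).mpr (Or.inr (Or.inr (Or.inr hy2)))) with h1 | h1
    · subst h1; exact hxrr hy2
    · subst h1; exact hh'rr hy2
  have hpgx : ∀ y ∈ p, y ∈ g ++ x :: m₁ → y = x := by
    intro y hy hy2
    rcases hdisj y hy ((memW y).mpr (Or.inl hy2)) with h1 | h1
    · exact h1
    · subst h1; exact absurd hy2 hh'gx
  -- p ∩ d₂ = ∅
  have hpd₂ : ∀ y ∈ p, y ∈ d₂ → False := by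
    intro y hy hy2
    rcases hmemp y hy with h1 | h1
    · exact hd₂ y hy2 (Or.inr h1)
    · exact hh'C (h1 ▸ hd₂C y hy2)
  -- r₁/r₂ facts
  have hr₁rr : ∀ y ∈ r₁, y ∈ rr := by
    intro y hy; rw [hrrEq]; simp [hy]
  have hr₂rr : ∀ y ∈ r₂, y ∈ rr := by
    intro y hy; rw [hrrEq]; simp [hy]
  -- case analysis on the location of a
  by_cases hA : a ∈ g ++ x :: m₁
  · -- CASE A : a is strictly above u
    obtain ⟨L₁, L₂, hLeq⟩ := List.append_of_mem hA
    have eW : g ++ x :: m₁ ++ u :: m₂ ++ h' :: rr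
        = L₁ ++ a :: L₂ ++ u :: (m₂ ++ h' :: r₁) ++ b :: r₂ := by
      calc g ++ x :: m₁ ++ u :: m₂ ++ h' :: rr
          = (g ++ x :: m₁) ++ (u :: m₂ ++ h' :: rr) := by simp
        _ = (L₁ ++ a :: L₂) ++ (u :: m₂ ++ h' :: (r₁ ++ b :: r₂)) := by rw [← hLeq, ← hrrEq]
        _ = L₁ ++ a :: L₂ ++ u :: (m₂ ++ h' :: r₁) ++ b :: r₂ := by simp
    refine ⟨a, b, L₁, L₂, m₂ ++ h' :: r₁, r₂, a :: (d₂ ++ [b]), ?_, hcor, ?_, htrans⟩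
    · rw [← eW]; exact hW
    · intro y hyp2 hyW2
      have hyW : y ∈ g ++ x :: m₁ ++ u :: m₂ ++ h' :: rr := by rw [eW]; exact hyW2
      rcases List.mem_cons.mp hyp2 with rfl | hy2
      · exact Or.inl rfl
      rcases List.mem_append.mp hy2 with hy3 | hy3
      · exact absurd hyW (hd₂W y hy3)
      · exact Or.inr (by simpa using hy3)
  · by_cases hB : a ∈ u :: m₂
    · -- CASE B : a is between u and h'
      obtain ⟨M₁, M₂, hMeq⟩ := List.append_of_mem hB
      obtain ⟨m₂2, hm₂2⟩ : ∃ m₂2, M₁ ++ a :: d₂ = u :: m₂2 := by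
        cases M₁ with
        | nil =>
          have h2 : u = a ∧ m₂ = M₂ := by simpa using hMeq
          exact ⟨d₂, by simp [← h2.1]⟩
        | cons w M₁' =>
          have hw : w = u := by
            have := hMeq
            simp at this
            exact this.1.symm
          exact ⟨M₁' ++ a :: d₂, by rw [hw]; simp⟩
      -- pieces of the new walk
      have eP : g ++ x :: m₁ ++ u :: m₂ ++ h' :: rr
          = (g ++ x :: m₁ ++ M₁) ++ a :: (M₂ ++ h' :: rr) := by
        calc g ++ x :: m₁ ++ u :: m₂ ++ h' :: rr
            = g ++ x :: m₁ ++ (M₁ ++ a :: M₂) ++ h' :: rr := by rw [← hMeq]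
          _ = (g ++ x :: m₁ ++ M₁) ++ a :: (M₂ ++ h' :: rr) := by simp
      have hpiece1 : IsWalk E ((g ++ x :: m₁ ++ M₁) ++ [a]) r a := by
        apply isWalk_prefix (l₂ := M₂ ++ h' :: rr) (b := v)
        rw [← eP]
        exact hW
      have hpieceSuf : IsWalk E (b :: r₂) b v :=
        ⟨(List.isChain_split.mp HChr2).2, by simp, hlastb⟩
      have hglue1 : IsWalk E (((g ++ x :: m₁ ++ M₁) ++ [a]) ++ (d₂ ++ [b])) r b := by
        have := isWalk_glue hpiece1 hcor
        simpa using this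
      have hglue2 : IsWalk E ((((g ++ x :: m₁ ++ M₁) ++ [a]) ++ (d₂ ++ [b])) ++ r₂) r v := by
        have := isWalk_glue hglue1 hpieceSuf
        simpa using this
      have eW2 : (((g ++ x :: m₁ ++ M₁) ++ [a]) ++ (d₂ ++ [b])) ++ r₂
          = g ++ x :: m₁ ++ u :: m₂2 ++ b :: r₂ := by
        calc (((g ++ x :: m₁ ++ M₁) ++ [a]) ++ (d₂ ++ [b])) ++ r₂
            = g ++ x :: m₁ ++ (M₁ ++ a :: d₂) ++ b :: r₂ := by simp
          _ = g ++ x :: m₁ ++ u :: m₂2 ++ b :: r₂ := by rw [hm₂2]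
      -- the new corridor p2
      have hwalkhb : IsWalk E (h' :: (r₁ ++ [b])) h' b := by
        refine ⟨?_, by simp, ?_⟩
        · have := (List.isChain_split (l₁ := h' :: r₁) (c := b) (l₂ := r₂)).mp
            (by simpa [List.Chain'] using HChr2)
          simpa [List.Chain'] using this.1
        · rw [show h' :: (r₁ ++ [b]) = (h' :: r₁) ++ [b] by simp, List.getLast?_concat]
      have hp2 : IsWalk E (p ++ (r₁ ++ [b])) x b := by
        have := isWalk_glue hp hwalkhb
        simpa using this
      -- membership in u :: m₂2
      have hmemM : ∀ y, y ∈ u :: m₂2 → y ∈ u :: m₂ ∨ y ∈ d₂ ∨ y = a := by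
        intro y hy
        rw [← hm₂2] at hy
        rcases List.mem_append.mp hy with h1 | h1
        · exact Or.inl (by rw [hMeq]; simp [h1])
        · rcases List.mem_cons.mp h1 with h2 | h2
          · right; right; exact h2
          · right; left; exact h2
      have haM : a ∈ u :: m₂ := hB
      refine ⟨x, b, g, m₁, m₂2, r₂, p ++ (r₁ ++ [b]), ?_, hp2, ?_, htrans⟩
      · rw [← eW2]; exact hglue2
      · intro y hyp2 hyW2
        have hyW2' : y ∈ g ++ x :: m₁ ∨ y ∈ u :: m₂2 ∨ y = b ∨ y ∈ r₂ := by
          simp only [List.mem_append, List.mem_cons] at hyW2 ⊢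
          tauto
        rcases List.mem_append.mp hyp2 with hyp | hyr
        · -- y ∈ p
          rcases hyW2' with h1 | h1 | h1 | h1
          · exact Or.inl (hpgx y hyp h1)
          · rcases hmemM y h1 with h2 | h2 | h2
            · exact absurd h2 (fun h => hpM y hyp h)
            · exact absurd h2 (fun h => hpd₂ y hyp h)
            · -- y = a with a ∈ u :: m₂
              exact absurd (h2 ▸ haM) (fun h => hpM y hyp h)
          · exact absurd (h1 ▸ hyp) hbp
          · exact absurd (hr₂rr y h1) (fun h => hprr y hyp h)
        · rcases List.mem_append.mp hyr with hyr1 | hyb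
          · -- y ∈ r₁
            exfalso
            have hyrr : y ∈ rr := hr₁rr y hyr1
            rcases hyW2' with h1 | h1 | h1 | h1
            · exact DTop y (List.mem_append.mpr (Or.inl h1)) (by simp [hyrr])
            · rcases hmemM y h1 with h2 | h2 | h2
              · exact DTop y (List.mem_append.mpr (Or.inr h2)) (by simp [hyrr])
              · exact hc₁rr y (hd₂c₁ y h2) hyrr
              · exact DTop y (List.mem_append.mpr (Or.inr (h2 ▸ haM))) (by simp [hyrr])
            · exact Dr y (by simp [hyr1]) (by simp [h1])
            · exact Dr y (by simp [hyr1]) (by simp [h1])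
          · -- y = b
            right
            simpa using hyb
    · -- CASE C : a is in the old corridor p
      have hapd : a ∈ p.dropLast := by
        rcases hUa with h1 | h1
        · rcases List.mem_append.mp h1 with h2 | h2
          · exact absurd h2 hA
          · exact absurd h2 hB
        · exact h1
      have hap : a ∈ p := (List.dropLast_sublist p).subset hapd
      have haW : a ∉ g ++ x :: m₁ ++ u :: m₂ ++ h' :: rr := by
        intro h0
        rcases (memW a).mp h0 with h1 | h1 | h1 | h1
        · exact hA h1
        · exact hB h1
        · exact hh'C (h1 ▸ haC)
        · exact hprr a hap h1
      obtain ⟨pd₁, pd₂, hpdEq⟩ := List.append_of_mem hapd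
      have hpEq : p = pd₁ ++ a :: (pd₂ ++ [h']) := by
        have h1 := isWalk_eq_dropLast hp
        rw [h1, hpdEq]
        simp
      have hpiece : IsWalk E (pd₁ ++ [a]) x a := by
        apply isWalk_prefix (l₂ := pd₂ ++ [h']) (b := h')
        rw [← hpEq]
        exact hp
      have hp2 : IsWalk E ((pd₁ ++ [a]) ++ (d₂ ++ [b])) x b := by
        have := isWalk_glue hpiece hcor
        simpa using this
      have eW : g ++ x :: m₁ ++ u :: m₂ ++ h' :: rr
          = g ++ x :: m₁ ++ u :: (m₂ ++ h' :: r₁) ++ b :: r₂ := by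
        rw [hrrEq]; simp
      have hpd₁p : ∀ y ∈ pd₁, y ∈ p.dropLast := by
        intro y hy; rw [hpdEq]; simp [hy]
      refine ⟨x, b, g, m₁, m₂ ++ h' :: r₁, r₂, (pd₁ ++ [a]) ++ (d₂ ++ [b]), ?_, hp2, ?_,
        htrans⟩
      · rw [← eW]; exact hW
      · intro y hyp2 hyW2
        have hyW : y ∈ g ++ x :: m₁ ++ u :: m₂ ++ h' :: rr := by rw [eW]; exact hyW2
        rcases List.mem_append.mp hyp2 with hy1 | hy2
        · rcases List.mem_append.mp hy1 with hy3 | hy4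
          · -- y ∈ pd₁ ⊆ p
            have hyp : y ∈ p := (List.dropLast_sublist p).subset (hpd₁p y hy3)
            rcases hdisj y hyp hyW with h1 | h1
            · exact Or.inl h1
            · exact absurd (h1 ▸ hpd₁p y hy3) hh'pd
          · -- y = a
            have : y = a := by simpa using hy4
            exact absurd (this ▸ hyW) haW
        · rcases List.mem_append.mp hy2 with hy3 | hy4
          · exact absurd hyW (hd₂W y hy3)
          · exact Or.inr (by simpa using hy4)


lemma head?_append_left {l : List V} (t : List V) {a : V} (h : l.head? = some a) :
    (l ++ t).head? = some a := by
  cases l with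
  | nil => simp at h
  | cons e l => simpa using h

lemma exists_walk_of_rtg {a b : V} (h : Relation.ReflTransGen E a b) :
    ∃ l, IsWalk E l a b := by
  induction h with
  | refl => exact ⟨[a], by simp [IsWalk, List.Chain', List.isChain_singleton]⟩
  | @tail s t hst hedge ih =>
    obtain ⟨l, hl⟩ := ih
    refine ⟨l ++ [t], ?_, head?_append_left _ hl.2.1, by simp⟩
    refine List.isChain_append.mpr ?_
    refine ⟨hl.1, by simp, ?_⟩
    intro p hp q hq
    rw [hl.2.2] at hp
    simp at hp hq
    rw [← hp, ← hq]
    exact hedge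


lemma isWalk_penult {p : List V} {a b : V} (hp : IsWalk E p a b) (hne : a ≠ b) :
    ∃ s c, p = s ++ [c, b] ∧ E c b := by
  have hd := isWalk_eq_dropLast hp
  have hpd : p.dropLast ≠ [] := by
    intro h0
    rw [h0] at hd
    have := hp.2.1
    rw [hd] at this
    simp at this
    exact hne this.symm
  obtain ⟨dd, c, hd2⟩ : ∃ dd c, p.dropLast = dd ++ [c] :=
    ⟨_, _, (List.dropLast_append_getLast hpd).symm⟩
  refine ⟨dd, c, ?_, ?_⟩
  · rw [hd, hd2]; simp
  · have hc := hp.1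
    rw [hd, hd2] at hc
    have hc2 : List.Chain' E (dd ++ c :: [b]) := by simpa using hc
    have := (List.isChain_split.mp hc2).2
    exact (List.isChain_cons_cons.mp this).1


lemma mem_of_mem_internals {l : List V} {y : V} (h : y ∈ internals l) : y ∈ l := by
  have h1 : y ∈ l.tail := (List.dropLast_sublist l.tail).subset h
  exact (List.tail_sublist l).subset h1


variable [Fintype V]

/-- The final assembly when the current hybrid candidate is a strict ancestor. -/
lemma finishDom {r u v x h' : V} {g m₁ m₂ rr p : List V}
    (hacyc : ∀ w, ¬ Relation.TransGen E w w)
    (hW : IsWalk E (g ++ x :: m₁ ++ u :: m₂ ++ h' :: rr) r v)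
    (hp : IsWalk E p x h')
    (hdisj : ∀ y ∈ p, y ∈ (g ++ x :: m₁ ++ u :: m₂ ++ h' :: rr) → y = x ∨ y = h')
    (hdom : ∀ l : List V, IsWalk E l r v → h' ∈ l) :
    ∃ (h x : V) (p q : List V),
      2 ≤ inDeg E h ∧
      (∀ l : List V, IsWalk E l r v → h ∈ l) ∧
      RetCycleAt E x h p q ∧
      (u ∈ internals p ∨ u ∈ internals q) := by
  have HC := hW.1
  -- regrouped chains
  have HCa : List.Chain' E ((g ++ x :: m₁) ++ (u :: (m₂ ++ h' :: rr))) := by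
    have : g ++ x :: m₁ ++ u :: m₂ ++ h' :: rr
        = (g ++ x :: m₁) ++ (u :: (m₂ ++ h' :: rr)) := by simp
    rwa [this] at HC
  have HCb : List.Chain' E ((g ++ x :: m₁ ++ u :: m₂) ++ (h' :: rr)) := by
    have : g ++ x :: m₁ ++ u :: m₂ ++ h' :: rr
        = (g ++ x :: m₁ ++ u :: m₂) ++ (h' :: rr) := by simp
    rwa [this] at HC
  -- basic distinctness facts
  have hxq : x ∉ m₁ ++ u :: m₂ := by
    intro hx
    have hxg : x ∈ g ++ x :: m₁ := by simp
    rcases List.mem_append.mp hx with hx1 | hx2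
    · -- x ∈ m₁ : x appears twice; use chain on (g++[x]) ++ (m₁ ++ ...)
      have HCc : List.Chain' E ((g ++ [x]) ++ (m₁ ++ u :: m₂ ++ h' :: rr)) := by
        have : g ++ x :: m₁ ++ u :: m₂ ++ h' :: rr
            = (g ++ [x]) ++ (m₁ ++ u :: m₂ ++ h' :: rr) := by simp
        rwa [this] at HC
      exact chain'_append_disjoint hacyc HCc x (by simp) (by simp [hx1])
    · refine chain'_append_disjoint hacyc HCa x hxg ?_
      rcases List.mem_cons.mp hx2 with h3 | h3
      · simp [h3]
      · simp [h3]
  have hxh : x ≠ h' := by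
    intro hxe
    exact chain'_append_disjoint hacyc HCb x (by simp) (by simp [hxe])
  have hxrr : x ∉ rr := fun hx =>
    chain'_append_disjoint hacyc HCb x (by simp) (by simp [hx])
  have hhq : h' ∉ m₁ ++ u :: m₂ := by
    intro hh
    refine chain'_append_disjoint hacyc HCb h' ?_ (by simp)
    rcases List.mem_append.mp hh with h1 | h2
    · simp [h1]
    · simp [h2]
  have hux : u ≠ x := by
    intro hue
    exact chain'_append_disjoint hacyc HCa x (by simp) (by simp [← hue])
  have huh : u ≠ h' := by
    intro hue
    exact chain'_append_disjoint hacyc HCb u (by simp) (by simp [hue])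
  -- the walk q
  have hq : IsWalk E (x :: m₁ ++ u :: m₂ ++ [h']) x h' := by
    refine ⟨?_, by simp, ?_⟩
    · have h1 : List.Chain' E (x :: (m₁ ++ u :: m₂ ++ h' :: rr)) := by
        have HC' : List.Chain' E (g ++ x :: (m₁ ++ u :: m₂ ++ h' :: rr)) := by
          have e1 : g ++ x :: m₁ ++ u :: m₂ ++ h' :: rr
              = g ++ x :: (m₁ ++ u :: m₂ ++ h' :: rr) := by simp
          rwa [e1] at HC
        exact (List.isChain_split.mp HC').2
      have h2 : List.Chain' E ((x :: m₁ ++ u :: m₂) ++ h' :: rr) := by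
        have : x :: (m₁ ++ u :: m₂ ++ h' :: rr) = (x :: m₁ ++ u :: m₂) ++ h' :: rr := by simp
        rwa [this] at h1
      have h3 := (List.isChain_split.mp h2).1
      have : (x :: m₁ ++ u :: m₂) ++ [h'] = x :: m₁ ++ u :: m₂ ++ [h'] := by simp
      rwa [this] at h3
    · have : x :: m₁ ++ u :: m₂ ++ [h'] = (x :: m₁ ++ u :: m₂) ++ [h'] := by simp
      rw [this, List.getLast?_concat]
  have hqint : internals (x :: m₁ ++ u :: m₂ ++ [h']) = m₁ ++ u :: m₂ := by
    show (m₁ ++ u :: m₂ ++ [h']).dropLast = m₁ ++ u :: m₂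
    rw [show m₁ ++ u :: m₂ ++ [h'] = (m₁ ++ u :: m₂) ++ [h'] by simp, List.dropLast_concat]
  -- u not in p
  have hup : u ∉ p := by
    intro hu
    rcases hdisj u hu (by simp) with h1 | h1
    · exact hux h1
    · exact huh h1
  -- penultimate vertices give the in-degree bound
  obtain ⟨s, c, hpeq, hec⟩ := isWalk_penult hp hxh
  have hqpen : ∃ c', E c' h' ∧ c' ∈ u :: m₂ := by
    have hne2 : (u :: m₂) ≠ ([] : List V) := by simp
    obtain ⟨dd, c', hd2⟩ : ∃ dd c', u :: m₂ = dd ++ [c'] :=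
      ⟨_, _, (List.dropLast_append_getLast hne2).symm⟩
    refine ⟨c', ?_, by rw [hd2]; simp⟩
    have h1 : List.Chain' E (x :: m₁ ++ u :: m₂ ++ [h']) := hq.1
    have h2 : List.Chain' E ((x :: m₁ ++ dd) ++ c' :: [h']) := by
      have : x :: m₁ ++ u :: m₂ ++ [h'] = (x :: m₁ ++ dd) ++ c' :: [h'] := by
        rw [hd2]; simp
      rwa [this] at h1
    exact (List.isChain_cons_cons.mp (List.isChain_split.mp h2).2).1
  obtain ⟨c', hec', hc'mem⟩ := hqpen
  have hcc' : c ≠ c' := by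
    intro hce
    subst hce
    have hcp : c ∈ p := by rw [hpeq]; simp
    have hcW : c ∈ g ++ x :: m₁ ++ u :: m₂ ++ h' :: rr := by
      rcases List.mem_cons.mp hc'mem with h1 | h1
      · simp [h1]
      · simp [h1]
    rcases hdisj c hcp hcW with h1 | h1
    · subst h1
      rcases List.mem_cons.mp hc'mem with h1 | h1
      · exact hux h1.symm
      · exact hxq (by simp [h1])
    · subst h1
      refine hhq ?_
      rcases List.mem_cons.mp hc'mem with h1 | h1
      · simp [h1]
      · simp [h1]
  have hdeg : 2 ≤ inDeg E h' := by
    have : Nontrivial {w // E w h'} := ⟨⟨c, hec⟩, ⟨c', hec'⟩, by simpa using hcc'⟩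
    have h2 := Finite.one_lt_card (α := {w // E w h'})
    unfold inDeg
    omega
  refine ⟨h', x, p, x :: m₁ ++ u :: m₂ ++ [h'], hdeg, hdom, ⟨hp, hq, ?_, ?_⟩, ?_⟩
  · -- p ≠ q
    intro hpq
    have : u ∈ p := by rw [hpq]; simp
    exact hup this
  · -- internal disjointness
    intro y hyp hyq
    rw [hqint] at hyq
    have hyp' : y ∈ p := mem_of_mem_internals hyp
    have hyW : y ∈ g ++ x :: m₁ ++ u :: m₂ ++ h' :: rr := by
      rcases List.mem_append.mp hyq with h1 | h1
      · simp [h1]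
      · rcases List.mem_cons.mp h1 with h2 | h2
        · simp [h2]
        · simp [h2]
    rcases hdisj y hyp' hyW with rfl | rfl
    · exact hxq hyq
    · exact hhq hyq
  · right
    rw [hqint]; simp


/-- Main well-founded descent. -/
lemma key {r u v : V} (hacyc : ∀ w, ¬ Relation.TransGen E w w) :
    ∀ (n : ℕ) (x h' : V) (g m₁ m₂ rr p : List V),
      IsWalk E (g ++ x :: m₁ ++ u :: m₂ ++ h' :: rr) r v →
      IsWalk E p x h' →
      (∀ y ∈ p, y ∈ (g ++ x :: m₁ ++ u :: m₂ ++ h' :: rr) → y = x ∨ y = h') →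
      {w | Relation.TransGen E h' w}.ncard ≤ n →
      ∃ (h x : V) (p q : List V),
        2 ≤ inDeg E h ∧
        (∀ l : List V, IsWalk E l r v → h ∈ l) ∧
        RetCycleAt E x h p q ∧
        (u ∈ internals p ∨ u ∈ internals q) := by
  classical
  intro n
  induction n with
  | zero =>
    intro x h' g m₁ m₂ rr p hW hp hdisj hn
    by_cases hdom : ∀ l : List V, IsWalk E l r v → h' ∈ l
    · exact finishDom hacyc hW hp hdisj hdom
    · exfalso
      push_neg at hdom
      obtain ⟨C, hC, hh'C⟩ := hdom
      obtain ⟨x2, h2, g2, m₁2, m₂2, rr2, p2, _, _, _, htrans⟩ :=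
        step hacyc hW hp hdisj hC hh'C
      have h0 : {w | Relation.TransGen E h' w}.ncard = 0 := Nat.le_zero.mp hn
      have hemp : {w | Relation.TransGen E h' w} = ∅ :=
        (Set.ncard_eq_zero (Set.toFinite _)).mp h0
      exact absurd (hemp ▸ htrans : h2 ∈ (∅ : Set V)) (by simp)
  | succ n ih =>
    intro x h' g m₁ m₂ rr p hW hp hdisj hn
    by_cases hdom : ∀ l : List V, IsWalk E l r v → h' ∈ l
    · exact finishDom hacyc hW hp hdisj hdom
    · push_neg at hdom
      obtain ⟨C, hC, hh'C⟩ := hdom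
      obtain ⟨x2, h2, g2, m₁2, m₂2, rr2, p2, hW2, hp2, hdisj2, htrans⟩ :=
        step hacyc hW hp hdisj hC hh'C
      have hss : {w | Relation.TransGen E h2 w} ⊂ {w | Relation.TransGen E h' w} := by
        constructor
        · intro w hw
          exact htrans.trans hw
        · intro hsub
          exact hacyc h2 (hsub htrans)
      have hlt : {w | Relation.TransGen E h2 w}.ncard
          < {w | Relation.TransGen E h' w}.ncard :=
        Set.ncard_lt_ncard hss (Set.toFinite _)
      exact ih x2 h2 g2 m₁2 m₂2 rr2 p2 hW2 hp2 hdisj2 (by omega)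

end Stmt9

/-- In a rooted DAG, if `v` is a descendant of `u` but not a strict descendant,
then there is a hybrid node `h` which is a strict ancestor of `v` together with a
reticulation cycle for `h` in one of whose merge paths `u` is intermediate. -/
theorem stmt9 {V : Type*} [Fintype V] (E : V → V → Prop) (r : V)
    (hacyc : ∀ v, ¬ Relation.TransGen E v v)
    (hroot : ∀ v, Relation.ReflTransGen E r v)
    (u v : V)
    (hdesc : Relation.ReflTransGen E u v)
    (hnonstrict : ∃ l : List V, IsWalk E l r v ∧ u ∉ l) :
    ∃ (h x : V) (p q : List V),
      2 ≤ inDeg E h ∧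
      (∀ l : List V, IsWalk E l r v → h ∈ l) ∧
      RetCycleAt E x h p q ∧
      (u ∈ internals p ∨ u ∈ internals q) := by
  classical
  open Stmt9 in
  obtain ⟨A, hA, huA⟩ := hnonstrict
  have hvA : v ∈ A := isWalk_last_mem hA
  have hrA : r ∈ A := mem_of_head? hA.2.1
  have huv : u ≠ v := fun h => huA (h ▸ hvA)
  obtain ⟨Wru, hWru⟩ := exists_walk_of_rtg (hroot u)
  obtain ⟨Wuv, hWuv⟩ := exists_walk_of_rtg hdesc
  have hWuveq : Wuv = u :: Wuv.tail := isWalk_eq_cons hWuv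
  have htuvne : Wuv.tail ≠ [] := by
    intro h0
    have h1 := hWuv.2.2
    rw [hWuveq, h0] at h1
    simp at h1
    exact huv h1
  have htuvlast : Wuv.tail.getLast? = some v := by
    have h1 := hWuv.2.2
    rw [hWuveq, show u :: Wuv.tail = [u] ++ Wuv.tail from rfl,
      List.getLast?_append_of_ne_nil _ htuvne] at h1
    exact h1
  have hvtuv : v ∈ Wuv.tail := mem_of_getLast? htuvlast
  have hchWuv : (u :: Wuv.tail).Chain' E := by rw [← hWuveq]; exact hWuv.1
  have hrnottuv : r ∉ Wuv.tail := by
    intro h0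
    have h1 : Relation.TransGen E u r := chain'_transGen_of_mem_tail hchWuv h0
    exact hacyc u (h1.trans_left (hroot u))
  -- first node of A inside Wuv.tail
  obtain ⟨a₁, h₀, a₂, hAeq, hh₀, ha₁⟩ :=
    exists_first_split (fun y => y ∈ Wuv.tail) A ⟨v, hvA, hvtuv⟩
  have ha₁ne : a₁ ≠ [] := by
    intro h0
    rw [h0] at hAeq
    have h2 : h₀ = r := by
      have h1 := hA.2.1
      rw [hAeq] at h1
      simpa using h1
    exact hrnottuv (h2 ▸ hh₀)
  have hra₁ : r ∈ a₁ := by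
    apply mem_of_head?
    apply head?_of_append (B := h₀ :: a₂) _ ha₁ne
    rw [← hAeq]
    exact hA.2.1
  -- last node of a₁ belonging to Wru
  have hrWru : r ∈ Wru := mem_of_head? hWru.2.1
  obtain ⟨e₁, x, e₂, ha₁eq, hxWru, he₂⟩ :=
    exists_last_split (fun y => y ∈ Wru) a₁ ⟨r, hra₁, hrWru⟩
  have hxA : x ∈ A := by rw [hAeq, ha₁eq]; simp
  have hxu : x ≠ u := fun h => huA (h ▸ hxA)
  -- split Wru at x
  obtain ⟨f₁, f₂, hWrueq⟩ := List.append_of_mem hxWru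
  have hWrulast : (x :: f₂).getLast? = some u := by
    have h1 := hWru.2.2
    rw [hWrueq, List.getLast?_append_cons] at h1
    exact h1
  have hf₂ne : f₂ ≠ [] := by
    intro h0
    rw [h0] at hWrulast
    simp at hWrulast
    exact hxu hWrulast
  obtain ⟨f₂', hf₂⟩ : ∃ f₂', f₂ = f₂' ++ [u] := by
    have h1 : f₂.getLast? = some u := by
      rwa [show x :: f₂ = [x] ++ f₂ from rfl, List.getLast?_append_of_ne_nil _ hf₂ne]
        at hWrulast
    rw [List.getLast?_eq_getLast_of_ne_nil hf₂ne] at h1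
    have h2 : f₂.getLast hf₂ne = u := by simpa using h1
    exact ⟨f₂.dropLast, by rw [← h2]; exact (List.dropLast_append_getLast hf₂ne).symm⟩
  -- split Wuv.tail at h₀
  obtain ⟨t₁, t₂, htEq⟩ := List.append_of_mem hh₀
  -- the big walk through u
  have hQ : IsWalk E (Wru ++ Wuv.tail) r v := isWalk_glue hWru hWuv
  have eQ : Wru ++ Wuv.tail = f₁ ++ x :: f₂' ++ u :: t₁ ++ h₀ :: t₂ := by
    rw [hWrueq, hf₂, htEq]
    simp
  -- the corridor p
  have hAeq2 : A = e₁ ++ x :: (e₂ ++ h₀ :: a₂) := by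
    rw [hAeq, ha₁eq]; simp
  have hpwalk : IsWalk E (x :: (e₂ ++ [h₀])) x h₀ := by
    have hch : List.Chain' E (x :: (e₂ ++ h₀ :: a₂)) := by
      have h1 := hA.1
      rw [hAeq2] at h1
      exact (List.isChain_split.mp h1).2
    have hch2 : List.Chain' E ((x :: e₂) ++ h₀ :: a₂) := by
      rwa [show x :: (e₂ ++ h₀ :: a₂) = (x :: e₂) ++ h₀ :: a₂ by simp] at hch
    have hch3 := (List.isChain_split.mp hch2).1
    refine ⟨by simpa [List.Chain'] using hch3, by simp, ?_⟩
    rw [show x :: (e₂ ++ [h₀]) = (x :: e₂) ++ [h₀] by simp, List.getLast?_concat]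
  have he₂A : ∀ y ∈ e₂, y ∈ a₁ := by
    intro y hy
    rw [ha₁eq]; simp [hy]
  -- the disjointness condition
  have hdisj0 : ∀ y ∈ (x :: (e₂ ++ [h₀])),
      y ∈ (f₁ ++ x :: f₂' ++ u :: t₁ ++ h₀ :: t₂) → y = x ∨ y = h₀ := by
    intro y hy hyW
    have hyQ : y ∈ Wru ++ Wuv.tail := by rw [eQ]; exact hyW
    rcases List.mem_cons.mp hy with rfl | hy2
    · exact Or.inl rfl
    rcases List.mem_append.mp hy2 with hy3 | hy4
    · exfalso
      rcases List.mem_append.mp hyQ with hq | hq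
      · exact he₂ y hy3 hq
      · exact ha₁ y (he₂A y hy3) hq
    · exact Or.inr (by simpa using hy4)
  -- run the descent
  have hW0 : IsWalk E (f₁ ++ x :: f₂' ++ u :: t₁ ++ h₀ :: t₂) r v := by
    rw [← eQ]; exact hQ
  exact key hacyc {w | Relation.TransGen E h₀ w}.ncard x h₀ f₁ f₂' t₁ t₂
    (x :: (e₂ ++ [h₀])) hW0 hpwalk hdisj0 le_rfl
end

section
/- Let N be a 1-nested hybridization network, let h be a hybrid node whose cluster is the singleton {i}, and let K be its reticulation cycle with split node u. Then the leaf i is a strict descendant of u: every path from the root to i contains u. -/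
section Aux
open List Relation

variable {V : Type*} {E : V → V → Prop} {a b c : V}

lemma gel_congr {l : List V} {i j : ℕ} (hij : i = j) (hi : i < l.length) :
    l[i]'hi = l[j]'(hij ▸ hi) := by subst hij; rfl

lemma isWalk_length_pos {l : List V} (hw : IsWalk E l a b) : 0 < l.length := by
  rcases hw with ⟨-, h2, -⟩
  cases l with
  | nil => simp at h2
  | cons x xs => simp

lemma isWalk_getElem_zero {l : List V} (hw : IsWalk E l a b)
    (h0 : 0 < l.length) : l[0] = a := by
  rcases hw with ⟨-, h2, -⟩
  cases l with
  | nil => simp at h0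
  | cons x xs => simpa using h2

lemma isWalk_getElem_last {l : List V} (hw : IsWalk E l a b)
    (h0 : l.length - 1 < l.length) : l[l.length - 1]'h0 = b := by
  rcases hw with ⟨-, -, h3⟩
  have hne : l ≠ [] := by rintro rfl; simp at h3
  rw [List.getLast?_eq_getLast hne] at h3
  have h4 := Option.some_injective _ h3
  rw [← h4, List.getLast_eq_getElem]

lemma isWalk_of {l : List V} (hc : l.Chain' E) (h0 : 0 < l.length)
    (ha : l[0]'h0 = a) (hb : l[l.length - 1]'(by omega) = b) : IsWalk E l a b := by
  refine ⟨hc, ?_, ?_⟩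
  · cases l with
    | nil => simp at h0
    | cons x xs => simpa using ha
  · have hne : l ≠ [] := List.ne_nil_of_length_pos h0
    rw [List.getLast?_eq_getLast hne, List.getLast_eq_getElem]
    exact congrArg some hb

lemma chain'_getElem {l : List V} (hc : l.Chain' E) {i : ℕ} (hi : i + 1 < l.length) :
    E (l[i]'(by omega)) (l[i+1]'hi) := by
  have := List.isChain_iff_getElem.mp hc i (by omega)
  simpa [List.get_eq_getElem] using this

lemma chain'_transGen {l : List V} (hc : l.Chain' E) {i j : ℕ} (hij : i < j)
    (hj : j < l.length) : Relation.TransGen E (l[i]'(by omega)) (l[j]'hj) := by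
  induction j with
  | zero => omega
  | succ n ihn =>
    have hE : E (l[n]'(by omega)) (l[n+1]'hj) := chain'_getElem hc hj
    rcases Nat.lt_or_ge i n with h1 | h2
    · exact (ihn h1 (by omega)).tail hE
    · have hin : i = n := by omega
      subst hin
      exact Relation.TransGen.single hE

lemma chain'_reflTransGen {l : List V} (hc : l.Chain' E) {i j : ℕ} (hij : i ≤ j)
    (hj : j < l.length) : Relation.ReflTransGen E (l[i]'(by omega)) (l[j]'hj) := by
  rcases Nat.eq_or_lt_of_le hij with h | h
  · subst h; exact Relation.ReflTransGen.refl
  · exact (chain'_transGen hc h hj).to_reflTransGen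

lemma chain'_nodup (hacyc : ∀ v, ¬ Relation.TransGen E v v) {l : List V}
    (hc : l.Chain' E) : l.Nodup := by
  rw [List.nodup_iff_injective_get]
  rintro ⟨i, hi⟩ ⟨j, hj⟩ hij
  simp only [List.get_eq_getElem] at hij
  by_contra hne
  have hne' : i ≠ j := by simpa using hne
  rcases Nat.lt_or_ge i j with hlt | hge
  · have ht := chain'_transGen hc hlt hj
    rw [hij] at ht
    exact hacyc _ ht
  · have hlt : j < i := by omega
    have ht := chain'_transGen hc hlt hi
    rw [hij] at ht
    exact hacyc _ ht

lemma isWalk_pair (hab : E a b) : IsWalk E [a, b] a b := by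
  refine ⟨?_, rfl, rfl⟩
  simp [List.Chain', hab]

lemma isWalk_append {l m : List V} (h1 : IsWalk E l a b)
    (h2 : IsWalk E m b c) : IsWalk E (l ++ m.tail) a c := by
  obtain ⟨hc1, hh1, hl1⟩ := h1
  obtain ⟨hc2, hh2, hl2⟩ := h2
  have hlnil : l ≠ [] := by rintro rfl; simp at hh1
  cases m with
  | nil => simp at hh2
  | cons y ys =>
    have hyb : y = b := by simpa using hh2
    cases ys with
    | nil =>
      have hbc : y = c := by simpa using hl2
      rw [hyb] at hbc
      subst hbc
      simpa using ⟨hc1, hh1, hl1⟩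
    | cons z zs =>
      refine ⟨?_, ?_, ?_⟩
      · rw [List.Chain', List.isChain_append]
        refine ⟨hc1, (List.isChain_cons_cons.mp hc2).2, ?_⟩
        intro x hx w hw
        rw [hl1] at hx
        have hxb : x = b := by simpa using hx.symm
        have hwz : w = z := by simpa using hw.symm
        subst hxb; subst hwz
        rw [← hyb]
        exact (List.isChain_cons_cons.mp hc2).1
      · rw [List.head?_append]
        rw [hh1]; rfl
      · show (l ++ (z :: zs)).getLast? = some c
        rw [List.getLast?_append_of_ne_nil l (by simp)]
        simpa using hl2

lemma exists_isWalk (hab : Relation.ReflTransGen E a b) : ∃ l, IsWalk E l a b := by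
  induction hab with
  | refl => exact ⟨[a], ⟨by simp [List.Chain'], rfl, rfl⟩⟩
  | tail hxy hE ih =>
    obtain ⟨l, hl⟩ := ih
    exact ⟨_, isWalk_append hl (isWalk_pair hE)⟩

end Aux
section Aux2
open List Relation

variable {V : Type*} {E : V → V → Prop} {a b c : V}

lemma isWalk_take {l : List V} (hw : IsWalk E l a b) {k : ℕ} (hk : k < l.length) :
    IsWalk E (l.take (k+1)) a (l[k]'hk) := by
  have hlen : (l.take (k+1)).length = k + 1 := by simp; omega
  have h0 : 0 < (l.take (k+1)).length := by omega
  refine isWalk_of (hw.1.take _) h0 ?_ ?_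
  · rw [List.getElem_take]
    exact isWalk_getElem_zero hw (by omega)
  · rw [List.getElem_take]
    exact gel_congr (by omega) _

lemma isWalk_drop {l : List V} (hw : IsWalk E l a b) {k : ℕ} (hk : k < l.length) :
    IsWalk E (l.drop k) (l[k]'hk) b := by
  have hlen : (l.drop k).length = l.length - k := by simp
  have h0 : 0 < (l.drop k).length := by omega
  refine isWalk_of (hw.1.drop _) h0 ?_ ?_
  · rw [List.getElem_drop]
    exact gel_congr (by omega) _
  · rw [List.getElem_drop]
    have h1 : k + ((l.drop k).length - 1) = l.length - 1 := by omega
    rw [gel_congr h1]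
    exact isWalk_getElem_last hw (by omega)

lemma length_arcsOf (l : List V) : (arcsOf l).length = l.length - 1 := by
  simp [arcsOf]

lemma mem_arcsOf {l : List V} {i : ℕ} (hi : i + 1 < l.length) :
    (l[i]'(by omega), l[i+1]'hi) ∈ arcsOf l := by
  have hlen : i < (arcsOf l).length := by rw [length_arcsOf]; omega
  have : (arcsOf l)[i]'hlen = (l[i]'(by omega), l[i+1]'hi) := by
    show (l.zip l.tail)[i]'_ = _
    exact List.getElem_zip.trans (by rw [List.getElem_tail])
  rw [← this]
  exact List.getElem_mem hlen

lemma length_internals (l : List V) : (internals l).length = l.length - 2 := by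
  simp [internals]; omega

lemma getElem_internals {l : List V} {i : ℕ} (hi : i < (internals l).length) :
    (internals l)[i]'hi = l[i+1]'(by rw [length_internals] at hi; omega) := by
  show l.tail.dropLast[i]'_ = _
  exact (List.getElem_dropLast _).trans (List.getElem_tail _)

lemma mem_internals_intro {l : List V} {i : ℕ} (h0 : 0 < i) (hi : i < l.length - 1) :
    l[i]'(by omega) ∈ internals l := by
  have hlen : i - 1 < (internals l).length := by rw [length_internals]; omega
  have := getElem_internals hlen
  rw [gel_congr (show i - 1 + 1 = i by omega)] at this
  rw [← this]
  exact List.getElem_mem hlen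

lemma mem_internals_elim {l : List V} {y : V} (hy : y ∈ internals l) :
    ∃ i, 0 < i ∧ ∃ hi : i < l.length - 1, l[i]'(by omega) = y := by
  obtain ⟨n, hn, hval⟩ := List.mem_iff_getElem.mp hy
  have hn2 := hn
  rw [length_internals] at hn2
  rw [getElem_internals hn] at hval
  exact ⟨n + 1, by omega, by omega, hval⟩

lemma internals_subset (l : List V) : internals l ⊆ l :=
  fun _ hy => (List.tail_sublist l).subset ((List.dropLast_sublist l.tail).subset hy)

variable [Fintype V]

lemma two_le_inDeg {w : V} (hab : a ≠ b) (ha : E a w) (hb : E b w) : 2 ≤ inDeg E w := by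
  have : Nontrivial {u // E u w} := ⟨⟨a, ha⟩, ⟨b, hb⟩, by simpa using hab⟩
  exact Finite.one_lt_card

lemma parent_eq_of_inDeg_le_two {w z : V} (h2 : inDeg E w ≤ 2) (hab : a ≠ b)
    (ha : E a w) (hb : E b w) (hz : E z w) : z = a ∨ z = b := by
  by_contra hcon
  push_neg at hcon
  obtain ⟨hza, hzb⟩ := hcon
  have hinj : Function.Injective (fun i : Fin 3 =>
      (![⟨a, ha⟩, ⟨b, hb⟩, ⟨z, hz⟩] i : {u // E u w})) := by
    intro i j hij
    fin_cases i <;> fin_cases j <;> simp_all <;>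
      first
        | rfl
        | (exact absurd (congrArg Subtype.val hij) (by simp [hab, hza, hzb, hab.symm, hza.symm, hzb.symm]))
  have := Nat.card_le_card_of_injective _ hinj
  simp [Nat.card_eq_fintype_card] at this
  unfold inDeg at h2
  omega
end Aux2
section Diverge
open List Relation

variable {V : Type*} {E : V → V → Prop}

lemma diverge (hacyc : ∀ v, ¬ Relation.TransGen E v v)
    {A B : List V} {r w : V}
    (hA : IsWalk E A r w) (hB : IsWalk E B r w)
    (hA2 : 2 ≤ A.length) (hB2 : 2 ≤ B.length)
    (hpen : A[A.length - 2]'(by omega) ≠ B[B.length - 2]'(by omega)) :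
    ∃ k j, ∃ (hk : k < A.length - 1) (hj : j < B.length - 1),
      A[k]'(by omega) = B[j]'(by omega) ∧
      RetCycleAt E (A[k]'(by omega)) w (A.drop k) (B.drop j) := by
  classical
  have hBnodup := chain'_nodup hacyc hB.1
  have key : ∃ j, ∃ hj : j < B.length - 1, B[j]'(by omega) ∈ A ∧
      ∀ m (hm1 : j < m) (hm2 : m < B.length - 1), B[m]'(by omega) ∉ A := by
    set P : ℕ → Prop := fun j => ∃ hj : j < B.length - 1, B[j]'(by omega) ∈ A with hPdef
    have hP0 : P 0 := by
      refine ⟨by omega, ?_⟩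
      have h1 : B[0]'(by omega) = r := isWalk_getElem_zero hB (by omega)
      have h2 : A[0]'(by omega) = r := isWalk_getElem_zero hA (by omega)
      rw [h1, ← h2]; exact List.getElem_mem _
    have hPj : P (Nat.findGreatest P (B.length - 2)) :=
      Nat.findGreatest_spec (Nat.zero_le _) hP0
    obtain ⟨hj, hmem⟩ := hPj
    refine ⟨Nat.findGreatest P (B.length - 2), hj, hmem, ?_⟩
    intro m hm1 hm2 hmem'
    exact Nat.findGreatest_is_greatest hm1 (by omega) ⟨hm2, hmem'⟩
  obtain ⟨j, hj, hmem, hmax⟩ := key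
  obtain ⟨k, hkA, hkval⟩ := List.mem_iff_getElem.mp hmem
  have hBlast : B[B.length - 1]'(by omega) = w := isWalk_getElem_last hB (by omega)
  have hALast : A[A.length - 1]'(by omega) = w := isWalk_getElem_last hA (by omega)
  have hxw : B[j]'(by omega) ≠ w := by
    intro hx
    have := hBnodup.getElem_inj_iff.mp (hx.trans hBlast.symm)
    omega
  have hk1 : k < A.length - 1 := by
    rcases Nat.lt_or_ge k (A.length - 1) with hlt | hge
    · exact hlt
    · exfalso
      have hke : k = A.length - 1 := by omega
      rw [gel_congr hke, hALast] at hkval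
      exact hxw hkval.symm
  refine ⟨k, j, hk1, hj, hkval, ?_, ?_, ?_, ?_⟩
  · exact isWalk_drop hA (by omega)
  · have hq' := isWalk_drop hB (show j < B.length by omega)
    rw [← hkval] at hq'
    exact hq'
  · intro heq
    have hlen : A.length - k = B.length - j := by
      have := congrArg List.length heq; simpa using this
    have h0 : (A.drop k)[A.length - k - 2]? = (B.drop j)[A.length - k - 2]? := by
      rw [heq]
    rw [List.getElem?_eq_getElem (by simp; omega), List.getElem?_eq_getElem (by simp; omega)] at h0
    have h1 := Option.some_injective _ h0
    rw [List.getElem_drop, List.getElem_drop] at h1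
    rw [gel_congr (show k + (A.length - k - 2) = A.length - 2 by omega),
      gel_congr (show j + (A.length - k - 2) = B.length - 2 by omega)] at h1
    exact hpen h1
  · intro y hyA hyB
    obtain ⟨i, hi0, hi, hval⟩ := mem_internals_elim hyB
    have hlenB : (B.drop j).length = B.length - j := by simp
    rw [List.getElem_drop] at hval
    have hnotin := hmax (j + i) (by omega) (by rw [hlenB] at hi; omega)
    rw [hval] at hnotin
    exact hnotin ((List.drop_subset _ _) (internals_subset _ hyA))

end Diverge
section RC
open List Relation

variable {V : Type*} {E : V → V → Prop} {u h a b c : V} {p q : List V}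

lemma RetCycleAt.symm' (hK : RetCycleAt E u h p q) : RetCycleAt E u h q p :=
  ⟨hK.2.1, hK.1, hK.2.2.1.symm, fun y hyq hyp => hK.2.2.2 y hyp hyq⟩

lemma retCycle_len (hacyc : ∀ v, ¬ Relation.TransGen E v v)
    (hK : RetCycleAt E u h p q) : 2 ≤ p.length := by
  obtain ⟨hp, hq, hne, -⟩ := hK
  by_contra hlen
  have hp1 : p.length = 1 := by have := isWalk_length_pos hp; omega
  have hu : p[0]'(by omega) = u := isWalk_getElem_zero hp (by omega)
  have hh : p[0]'(by omega) = h := by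
    have hlast := isWalk_getElem_last hp (by omega)
    rwa [gel_congr (show p.length - 1 = 0 by omega)] at hlast
  have huh : u = h := hu.symm.trans hh
  rcases Nat.lt_or_ge q.length 2 with hq2 | hq2
  · have hq1 : q.length = 1 := by have := isWalk_length_pos hq; omega
    apply hne
    apply List.ext_getElem (by omega)
    intro i h1 h2
    have hi0 : i = 0 := by omega
    subst hi0
    rw [hu, isWalk_getElem_zero hq (by omega)]
  · have hqu : q[0]'(by omega) = u := isWalk_getElem_zero hq (by omega)
    have hqh : q[q.length - 1]'(by omega) = h := isWalk_getElem_last hq (by omega)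
    have ht := chain'_transGen hq.1 (show 0 < q.length - 1 by omega) (by omega)
    rw [hqu, hqh, ← huh] at ht
    exact hacyc u ht

lemma pen_ne (hacyc : ∀ v, ¬ Relation.TransGen E v v)
    (hK : RetCycleAt E u h p q) (hp2 : 2 ≤ p.length) (hq2 : 2 ≤ q.length) :
    p[p.length - 2]'(by omega) ≠ q[q.length - 2]'(by omega) := by
  obtain ⟨hp, hq, hne, hdisj⟩ := hK
  have hnp := chain'_nodup hacyc hp.1
  have hnq := chain'_nodup hacyc hq.1
  intro heq
  by_cases hp3 : 3 ≤ p.length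
  · have hmemp : p[p.length - 2]'(by omega) ∈ internals p :=
      mem_internals_intro (by omega) (by omega)
    by_cases hq3 : 3 ≤ q.length
    · have hmemq : q[q.length - 2]'(by omega) ∈ internals q :=
        mem_internals_intro (by omega) (by omega)
      rw [← heq] at hmemq
      exact hdisj _ hmemp hmemq
    · have hq0 : q.length - 2 = 0 := by omega
      rw [gel_congr hq0, isWalk_getElem_zero hq (by omega)] at heq
      have hp0 : p[0]'(by omega) = u := isWalk_getElem_zero hp (by omega)
      rw [← hp0] at heq
      have := hnp.getElem_inj_iff.mp heq
      omega
  · by_cases hq3 : 3 ≤ q.length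
    · have hp0 : p.length - 2 = 0 := by omega
      rw [gel_congr hp0, isWalk_getElem_zero hp (by omega)] at heq
      have hq0 : q[0]'(by omega) = u := isWalk_getElem_zero hq (by omega)
      rw [← hq0] at heq
      have := hnq.getElem_inj_iff.mp heq.symm
      omega
    · apply hne
      apply List.ext_getElem (by omega)
      intro i h1 h2
      have hi : i = 0 ∨ i = 1 := by omega
      rcases hi with hi | hi <;> subst hi
      · rw [isWalk_getElem_zero hp (by omega), isWalk_getElem_zero hq (by omega)]
      · have h1' := isWalk_getElem_last hp (by omega)
        have h2' := isWalk_getElem_last hq (by omega)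
        rw [gel_congr (show p.length - 1 = 1 by omega)] at h1'
        rw [gel_congr (show q.length - 1 = 1 by omega)] at h2'
        rw [h1', h2']

lemma getElem_append_tail_right {l m : List V} (h1 : IsWalk E l a b)
    (h2 : IsWalk E m b c) {i : ℕ} (hi1 : l.length - 1 ≤ i)
    (hi2 : i < l.length + m.length - 1) :
    (l ++ m.tail)[i]'(by
      have := isWalk_length_pos h1; have := isWalk_length_pos h2; simp; omega)
      = m[i - (l.length - 1)]'(by
      have := isWalk_length_pos h1; have := isWalk_length_pos h2; omega) := by
  have hl := isWalk_length_pos h1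
  have hm := isWalk_length_pos h2
  rcases Nat.eq_or_lt_of_le hi1 with he | hlt
  · rw [List.getElem_append_left (by omega)]
    have hb := isWalk_getElem_last h1 (by omega)
    have hm0 := isWalk_getElem_zero h2 hm
    rw [gel_congr (show i = l.length - 1 by omega), hb,
      gel_congr (show i - (l.length - 1) = 0 by omega), hm0]
  · rw [List.getElem_append_right (by omega)]
    rw [List.getElem_tail]
    exact gel_congr (by omega) _

lemma isWalk_reflTransGen_from {l : List V} (hw : IsWalk E l a b) {y : V} (hy : y ∈ l) :
    Relation.ReflTransGen E a y := by
  obtain ⟨n, hn, hval⟩ := List.mem_iff_getElem.mp hy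
  have := chain'_reflTransGen hw.1 (Nat.zero_le n) hn
  rwa [isWalk_getElem_zero hw (by omega), hval] at this

lemma isWalk_reflTransGen_to {l : List V} (hw : IsWalk E l a b) {y : V} (hy : y ∈ l) :
    Relation.ReflTransGen E y b := by
  obtain ⟨n, hn, hval⟩ := List.mem_iff_getElem.mp hy
  have := chain'_reflTransGen hw.1 (show n ≤ l.length - 1 by omega) (by omega)
  rwa [isWalk_getElem_last hw (by omega), hval] at this

end RC
section H1
open List Relation

variable {V : Type*} [Fintype V] {E : V → V → Prop} {r u h : V} {p q : List V}

set_option maxHeartbeats 2000000 in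
lemma internal_parent_unique
    (hacyc : ∀ v, ¬ Relation.TransGen E v v)
    (hroot : ∀ v, Relation.ReflTransGen E r v)
    (hnested : OneNested E)
    (hhyb : 2 ≤ inDeg E h) (hK : RetCycleAt E u h p q)
    {s : ℕ} (hs1 : 1 ≤ s) (hs : s < p.length - 1) {z : V}
    (hz : E z (p[s]'(by omega))) : z = p[s-1]'(by omega) := by
  by_contra hzne
  have hpw := hK.1
  have hplen : 2 ≤ p.length := by omega
  have hnp := chain'_nodup hacyc hpw.1
  have hEp : E (p[s-1]'(by omega)) (p[s]'(by omega)) := by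
    have := chain'_getElem hpw.1 (i := s - 1) (by omega)
    rwa [gel_congr (show s - 1 + 1 = s by omega)] at this
  -- walk A from r to p[s] finishing with the cycle arc (p[s-1], p[s])
  have hAex : ∃ A : List V, ∃ hl : 2 ≤ A.length, IsWalk E A r (p[s]'(by omega)) ∧
      A[A.length - 2]'(by omega) = p[s-1]'(by omega) := by
    obtain ⟨R, hR⟩ := exists_isWalk (hroot u)
    have hRlen := isWalk_length_pos hR
    have hA1 : IsWalk E (p.take (s+1)) u (p[s]'(by omega)) := isWalk_take hpw (by omega)
    have hA1len : (p.take (s+1)).length = s + 1 := by simp; omega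
    have hA : IsWalk E (R ++ (p.take (s+1)).tail) r (p[s]'(by omega)) := isWalk_append hR hA1
    have hAlen : (R ++ (p.take (s+1)).tail).length = R.length + s := by simp; omega
    refine ⟨R ++ (p.take (s+1)).tail, by omega, hA, ?_⟩
    have hmid := getElem_append_tail_right hR hA1 (i := R.length + s - 2)
      (by omega) (by omega)
    rw [gel_congr (show (R ++ (p.take (s+1)).tail).length - 2 = R.length + s - 2 by omega),
      hmid, List.getElem_take]
    exact gel_congr (by omega) _
  obtain ⟨A, hA2, hA, hpenA⟩ := hAex
  -- walk B from r to p[s] finishing with the arc (z, p[s])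
  have hBex : ∃ B : List V, ∃ hl : 2 ≤ B.length, IsWalk E B r (p[s]'(by omega)) ∧
      B[B.length - 2]'(by omega) = z := by
    obtain ⟨Wz, hWz⟩ := exists_isWalk (hroot z)
    have hWzlen := isWalk_length_pos hWz
    have hB : IsWalk E (Wz ++ [p[s]'(by omega)]) r (p[s]'(by omega)) := by
      have := isWalk_append hWz (isWalk_pair hz)
      simpa using this
    have hBlen : (Wz ++ [p[s]'(by omega)]).length = Wz.length + 1 := by simp
    refine ⟨Wz ++ [p[s]'(by omega)], by omega, hB, ?_⟩
    rw [List.getElem_append_left (by omega)]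
    have := isWalk_getElem_last hWz (by omega)
    rw [← this]
    exact gel_congr (by omega) _
  obtain ⟨B, hB2, hB, hpenB⟩ := hBex
  have hpen : A[A.length - 2]'(by omega) ≠ B[B.length - 2]'(by omega) := by
    rw [hpenA, hpenB]
    intro hcon
    exact hzne hcon.symm
  obtain ⟨k, j, hk, hj, hkval, hK'⟩ := diverge hacyc hA hB hA2 hB2 hpen
  have hv2 : 2 ≤ inDeg E (p[s]'(by omega)) := two_le_inDeg hzne hz hEp
  have hne : ¬ (u = A[k]'(by omega) ∧ h = p[s]'(by omega) ∧
      ({p, q} : Set (List V)) = {A.drop k, B.drop j}) := by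
    rintro ⟨-, hh, -⟩
    have hlast : p[p.length - 1]'(by omega) = h := isWalk_getElem_last hpw (by omega)
    rw [← hlast] at hh
    have := hnp.getElem_inj_iff.mp hh
    omega
  have ha0p : (p[s-1]'(by omega), p[s]'(by omega)) ∈ arcsOf p := by
    have := mem_arcsOf (l := p) (i := s - 1) (by omega)
    rwa [gel_congr (show s - 1 + 1 = s by omega)] at this
  have hAlast : A[A.length - 1]'(by omega) = p[s]'(by omega) :=
    isWalk_getElem_last hA (by omega)
  have ha0A : (p[s-1]'(by omega), p[s]'(by omega)) ∈ arcsOf (A.drop k) := by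
    have hdlen : (A.drop k).length = A.length - k := by simp
    have hmem := mem_arcsOf (l := A.drop k) (i := A.length - 2 - k) (by rw [hdlen]; omega)
    rw [List.getElem_drop, List.getElem_drop] at hmem
    rw [gel_congr (show k + (A.length - 2 - k) = A.length - 2 by omega), hpenA] at hmem
    rwa [gel_congr (show k + (A.length - 2 - k + 1) = A.length - 1 by omega), hAlast] at hmem
  exact hnested u h p q (A[k]'(by omega)) (p[s]'(by omega)) (A.drop k) (B.drop j)
    hhyb hv2 hK hK' hne _ (List.mem_append.mpr (Or.inl ha0p))
    (List.mem_append.mpr (Or.inl ha0A))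

end H1
section LemB
open List Relation

variable {V : Type*} [Fintype V] {E : V → V → Prop} {r u h : V} {p q : List V}

lemma parent_of_h (hacyc : ∀ v, ¬ Relation.TransGen E v v)
    (hin2 : inDeg E h ≤ 2) (hK : RetCycleAt E u h p q) {z : V} (hz : E z h) :
    z = p[p.length - 2]'(by have := retCycle_len hacyc hK; omega) ∨
      z = q[q.length - 2]'(by have := retCycle_len hacyc hK.symm'; omega) := by
  have hp2 := retCycle_len hacyc hK
  have hq2 := retCycle_len hacyc hK.symm'
  have hpen := pen_ne hacyc hK hp2 hq2
  have hEp : E (p[p.length - 2]'(by omega)) h := by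
    have := chain'_getElem hK.1.1 (i := p.length - 2) (by omega)
    rwa [gel_congr (show p.length - 2 + 1 = p.length - 1 by omega),
      isWalk_getElem_last hK.1 (by omega)] at this
  have hEq : E (q[q.length - 2]'(by omega)) h := by
    have := chain'_getElem hK.2.1.1 (i := q.length - 2) (by omega)
    rwa [gel_congr (show q.length - 2 + 1 = q.length - 1 by omega),
      isWalk_getElem_last hK.2.1 (by omega)] at this
  exact parent_eq_of_inDeg_le_two hin2 hpen hEp hEq hz

set_option maxHeartbeats 2000000 in
lemma cycle_strict (hacyc : ∀ v, ¬ Relation.TransGen E v v)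
    (hroot : ∀ v, Relation.ReflTransGen E r v)
    (hin2 : inDeg E h ≤ 2) (hnested : OneNested E) (hhyb : 2 ≤ inDeg E h) :
    ∀ n (p q : List V), RetCycleAt E u h p q → ∀ v, v ∈ p →
      ∀ W, W.length ≤ n → IsWalk E W r v → u ∈ W := by
  intro n
  induction n with
  | zero =>
    intro p q hK v hv W hW hwalk
    have := isWalk_length_pos hwalk
    omega
  | succ n ih =>
    intro p q hK v hv W hW hwalk
    have hp2 := retCycle_len hacyc hK
    have hq2 := retCycle_len hacyc hK.symm'
    have hnp := chain'_nodup hacyc hK.1.1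
    have hWpos := isWalk_length_pos hwalk
    obtain ⟨s, hsb, hsv⟩ := List.mem_iff_getElem.mp hv
    by_cases hs0 : s = 0
    · -- v = u : u is the last element of W
      subst hs0
      have hvu : v = u := by rw [← hsv]; exact isWalk_getElem_zero hK.1 (by omega)
      have hlast := isWalk_getElem_last hwalk (by omega)
      rw [hvu] at hlast
      exact hlast ▸ List.getElem_mem _
    · have hs1 : 1 ≤ s := by omega
      have hpv : E (p[s-1]'(by omega)) v := by
        have := chain'_getElem hK.1.1 (i := s - 1) (by omega)
        rwa [gel_congr (show s - 1 + 1 = s by omega), hsv] at this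
      have htrv : Relation.TransGen E r v := Relation.TransGen.tail' (hroot _) hpv
      have hW2 : 2 ≤ W.length := by
        by_contra hcon
        have hW1 : W.length = 1 := by omega
        have h0 := isWalk_getElem_zero hwalk (by omega)
        have h1 := isWalk_getElem_last hwalk (by omega)
        rw [gel_congr (show W.length - 1 = 0 by omega), h0] at h1
        rw [← h1] at htrv
        exact hacyc r htrv
      have hEz : E (W[W.length - 2]'(by omega)) v := by
        have := chain'_getElem hwalk.1 (i := W.length - 2) (by omega)
        rwa [gel_congr (show W.length - 2 + 1 = W.length - 1 by omega),
          isWalk_getElem_last hwalk (by omega)] at this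
      have hW' : IsWalk E (W.take (W.length - 1)) r (W[W.length - 2]'(by omega)) := by
        have := isWalk_take hwalk (k := W.length - 2) (by omega)
        rwa [show W.length - 2 + 1 = W.length - 1 by omega] at this
      have hWlen' : (W.take (W.length - 1)).length ≤ n := by simp; omega
      have hsubset : W.take (W.length - 1) ⊆ W := List.take_subset _ _
      by_cases hsl : s = p.length - 1
      · -- v = h
        have hvh : v = h := by
          rw [← hsv, gel_congr (show s = p.length - 1 from hsl)]
          exact isWalk_getElem_last hK.1 (by omega)
        rw [hvh] at hEz
        rcases parent_of_h hacyc hin2 hK hEz with h1 | h1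
        · exact hsubset (ih p q hK _ (h1 ▸ List.getElem_mem _) _ hWlen' hW')
        · exact hsubset (ih q p hK.symm' _ (h1 ▸ List.getElem_mem _) _ hWlen' hW')
      · have hsmid : s < p.length - 1 := by omega
        have hEz' : E (W[W.length - 2]'(by omega)) (p[s]'(by omega)) := by rwa [hsv]
        have hzeq := internal_parent_unique hacyc hroot hnested hhyb hK hs1 hsmid hEz'
        exact hsubset (ih p q hK _ (hzeq ▸ List.getElem_mem _) _ hWlen' hW')

end LemB

set_option maxHeartbeats 4000000 in
/-- In a 1-nested hybridization network, if `h` is a hybrid node with cluster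
`{i}` and reticulation cycle with split node `u`, then the leaf `i` is a strict
descendant of `u`. -/
theorem stmt11 {V : Type*} [Fintype V] (E : V → V → Prop) (r : V)
    (hacyc : ∀ v, ¬ Relation.TransGen E v v)
    (hroot : ∀ v, Relation.ReflTransGen E r v)
    (hin2 : ∀ v, inDeg E v ≤ 2)
    (hnod1 : ∀ v, inDeg E v ≤ 1 → outDeg E v ≠ 1)
    (hnested : OneNested E)
    (u h i : V) (p q : List V)
    (hhyb : 2 ≤ inDeg E h)
    (hK : RetCycleAt E u h p q)
    (hcl : cluster E h = {i}) :
    ∀ l : List V, IsWalk E l r i → u ∈ l := by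
  classical
  intro L hL
  by_contra hu
  have hp2 := retCycle_len hacyc hK
  have hq2 := retCycle_len hacyc hK.symm'
  have hLpos := isWalk_length_pos hL
  have hpenE : E (p[p.length - 2]'(by omega)) h := by
    have := chain'_getElem hK.1.1 (i := p.length - 2) (by omega)
    rwa [gel_congr (show p.length - 2 + 1 = p.length - 1 by omega),
      isWalk_getElem_last hK.1 (by omega)] at this
  -- i is a descendant of h
  have hhi : Relation.ReflTransGen E h i := by
    have hmem : i ∈ cluster E h := by rw [hcl]; rfl
    exact hmem.2
  -- the first vertex on L that is a descendant of h
  have hQ : ∃ m, ∃ hm : m < L.length, Relation.ReflTransGen E h (L[m]'hm) := by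
    refine ⟨L.length - 1, by omega, ?_⟩
    rw [isWalk_getElem_last hL (by omega)]
    exact hhi
  obtain ⟨m0, ⟨hm0, hdesc⟩, hmin⟩ :
      ∃ m0, (∃ hm : m0 < L.length, Relation.ReflTransGen E h (L[m0]'hm)) ∧
        ∀ m', m' < m0 → ¬ ∃ hm' : m' < L.length, Relation.ReflTransGen E h (L[m']'hm') :=
    ⟨Nat.find hQ, Nat.find_spec hQ, fun m' hlt => Nat.find_min hQ hlt⟩
  have hm01 : 1 ≤ m0 := by
    by_contra hcon
    have htr : Relation.TransGen E r h := Relation.TransGen.tail' (hroot _) hpenE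
    have hdesc' := hdesc
    rw [gel_congr (show m0 = 0 by omega), isWalk_getElem_zero hL (by omega)] at hdesc'
    exact hacyc h (Relation.TransGen.trans_right hdesc' htr)
  have hEw : E (L[m0-1]'(by omega)) (L[m0]'hm0) := by
    have := chain'_getElem hL.1 (i := m0 - 1) (by omega)
    rwa [gel_congr (show m0 - 1 + 1 = m0 by omega)] at this
  have hndw0 : ¬ Relation.ReflTransGen E h (L[m0-1]'(by omega)) := by
    intro hcon
    exact hmin (m0-1) (by omega) ⟨by omega, hcon⟩
  by_cases hwh : L[m0]'hm0 = h
  · -- the first descendant is h itself : its parent on L lies on the cycle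
    rw [hwh] at hEw
    have hBwalk : IsWalk E (L.take m0) r (L[m0-1]'(by omega)) := by
      have := isWalk_take hL (k := m0 - 1) (by omega)
      rwa [show m0 - 1 + 1 = m0 by omega] at this
    rcases parent_of_h hacyc (hin2 h) hK hEw with h1 | h1
    · have hmem := cycle_strict hacyc hroot (hin2 h) hnested hhyb (L.take m0).length p q hK
        _ (h1 ▸ List.getElem_mem (by omega)) _ le_rfl hBwalk
      exact hu (List.take_subset _ _ hmem)
    · have hmem := cycle_strict hacyc hroot (hin2 h) hnested hhyb (L.take m0).length q p
        hK.symm' _ (h1 ▸ List.getElem_mem (by omega)) _ le_rfl hBwalk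
      exact hu (List.take_subset _ _ hmem)
  · -- the first descendant is a proper descendant of h : it is a hybrid node
    obtain ⟨H, hH⟩ := exists_isWalk hdesc
    have hHpos := isWalk_length_pos hH
    have hH2 : 2 ≤ H.length := by
      by_contra hcon
      have h0 := isWalk_getElem_zero hH (by omega)
      have h1 := isWalk_getElem_last hH (by omega)
      rw [gel_congr (show H.length - 1 = 0 by omega), h0] at h1
      exact hwh h1.symm
    have hEc : E (H[H.length-2]'(by omega)) (L[m0]'hm0) := by
      have := chain'_getElem hH.1 (i := H.length - 2) (by omega)
      rwa [gel_congr (show H.length - 2 + 1 = H.length - 1 by omega),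
        isWalk_getElem_last hH (by omega)] at this
    have hRTc : Relation.ReflTransGen E h (H[H.length-2]'(by omega)) :=
      isWalk_reflTransGen_from hH (List.getElem_mem (by omega))
    have hcw0 : H[H.length-2]'(by omega) ≠ L[m0-1]'(by omega) := by
      intro hcon
      rw [hcon] at hRTc
      exact hndw0 hRTc
    -- walk A through the cycle and down to L[m0]
    have hAex : ∃ A : List V, ∃ hl : 2 ≤ A.length, IsWalk E A r (L[m0]'hm0) ∧
        A[A.length-2]'(by omega) = H[H.length-2]'(by omega) ∧
        ∃ t, ∃ ht : t + 1 < A.length,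
          A[t]'(by omega) = p[p.length-2]'(by omega) ∧ A[t+1]'ht = h ∧
          ∀ k (hk : k < A.length), A[k]'hk ∈ p ∨
            Relation.ReflTransGen E h (A[k]'hk) ∨ k ≤ t := by
      obtain ⟨R, hR⟩ := exists_isWalk (hroot u)
      have hRlen := isWalk_length_pos hR
      have hAB : IsWalk E (R ++ p.tail) r h := isWalk_append hR hK.1
      have hABlen : (R ++ p.tail).length = R.length + p.length - 1 := by simp; omega
      have hA : IsWalk E ((R ++ p.tail) ++ H.tail) r (L[m0]'hm0) := isWalk_append hAB hH
      have hAlen : ((R ++ p.tail) ++ H.tail).length = R.length + p.length + H.length - 2 := by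
        simp; omega
      refine ⟨(R ++ p.tail) ++ H.tail, by omega, hA, ?_,
        R.length + p.length - 3, by omega, ?_, ?_, ?_⟩
      · have hmid := getElem_append_tail_right hAB hH (i := R.length + p.length + H.length - 4)
          (by omega) (by omega)
        rw [gel_congr (show ((R ++ p.tail) ++ H.tail).length - 2
            = R.length + p.length + H.length - 4 by omega), hmid]
        exact gel_congr (by omega) _
      · rw [List.getElem_append_left (by omega)]
        have hmid := getElem_append_tail_right hR hK.1 (i := R.length + p.length - 3)
          (by omega) (by omega)
        rw [hmid]
        exact gel_congr (by omega) _
      · rw [List.getElem_append_left (by omega)]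
        have hmid := getElem_append_tail_right hR hK.1 (i := R.length + p.length - 2)
          (by omega) (by omega)
        rw [gel_congr (show R.length + p.length - 3 + 1 = R.length + p.length - 2 by omega), hmid,
          gel_congr (show R.length + p.length - 2 - (R.length - 1) = p.length - 1 by omega)]
        exact isWalk_getElem_last hK.1 (by omega)
      · intro k hk
        rcases Nat.lt_or_ge k ((R ++ p.tail).length) with hk1 | hk1
        · rcases Nat.lt_or_ge k R.length with hk2 | hk2
          · right; right
            omega
          · left
            rw [List.getElem_append_left hk1]
            have hmid := getElem_append_tail_right hR hK.1 (i := k) (by omega) (by omega)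
            rw [hmid]
            exact List.getElem_mem _
        · right; left
          have hmid := getElem_append_tail_right hAB hH (i := k) (by omega) (by omega)
          rw [hmid]
          exact isWalk_reflTransGen_from hH (List.getElem_mem _)
    obtain ⟨A, hA2, hA, hpenA, t, ht, hAt, hAt1, hAmem⟩ := hAex
    -- the walk B : the prefix of L up to L[m0]
    have hBwalk : IsWalk E (L.take (m0+1)) r (L[m0]'hm0) := isWalk_take hL hm0
    have hBlen : (L.take (m0+1)).length = m0 + 1 := by simp; omega
    have hpenB : (L.take (m0+1))[(L.take (m0+1)).length - 2]'(by omega) = L[m0-1]'(by omega) := by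
      rw [List.getElem_take]
      exact gel_congr (by rw [hBlen]; omega) _
    have hpen : A[A.length-2]'(by omega) ≠
        (L.take (m0+1))[(L.take (m0+1)).length - 2]'(by omega) := by
      rw [hpenA, hpenB]
      exact hcw0
    obtain ⟨k, j, hk, hj, hkval, hK'⟩ := diverge hacyc hA hBwalk hA2 (by omega) hpen
    have hjm : j < m0 := by
      have hj' := hj
      rw [hBlen] at hj'
      omega
    have hxL : A[k]'(by omega) = L[j]'(by omega) := by
      rw [hkval]
      exact List.getElem_take
    rcases hAmem k (by omega) with hxp | hxd | hxt
    · -- the split of the new cycle lies on p : impossible since B avoids u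
      have hBj : IsWalk E ((L.take (m0+1)).take (j+1)) r (A[k]'(by omega)) := by
        have := isWalk_take hBwalk (k := j) (by omega)
        rwa [← hkval] at this
      have hmem := cycle_strict hacyc hroot (hin2 h) hnested hhyb
        ((L.take (m0+1)).take (j+1)).length p q hK _ hxp _ le_rfl hBj
      exact hu (List.take_subset _ _ (List.take_subset _ _ hmem))
    · -- the split is a descendant of h : contradicts minimality of m0
      rw [hxL] at hxd
      exact hmin j hjm ⟨by omega, hxd⟩
    · -- the split lies above u : the new cycle contains the arc (p[|p|-2], h) of K
      have hv2 : 2 ≤ inDeg E (L[m0]'hm0) := two_le_inDeg hcw0 hEc hEw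
      have hne : ¬ (u = A[k]'(by omega) ∧ h = L[m0]'hm0 ∧
          ({p, q} : Set (List V)) = {A.drop k, (L.take (m0+1)).drop j}) := by
        rintro ⟨-, hh, -⟩
        exact hwh hh.symm
      have ha0p : (p[p.length-2]'(by omega), h) ∈ arcsOf p := by
        have := mem_arcsOf (l := p) (i := p.length - 2) (by omega)
        rwa [gel_congr (show p.length - 2 + 1 = p.length - 1 by omega),
          isWalk_getElem_last hK.1 (by omega)] at this
      have ha0A : (p[p.length-2]'(by omega), h) ∈ arcsOf (A.drop k) := by
        have hdlen : (A.drop k).length = A.length - k := by simp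
        have hmem := mem_arcsOf (l := A.drop k) (i := t - k) (by rw [hdlen]; omega)
        rw [List.getElem_drop, List.getElem_drop] at hmem
        rw [gel_congr (show k + (t - k) = t by omega), hAt] at hmem
        rwa [gel_congr (show k + (t - k + 1) = t + 1 by omega), hAt1] at hmem
      exact hnested u h p q (A[k]'(by omega)) (L[m0]'hm0) (A.drop k) ((L.take (m0+1)).drop j)
        hhyb hv2 hK hK' hne _ (List.mem_append.mpr (Or.inl ha0p))
        (List.mem_append.mpr (Or.inl ha0A))
end

section
/- Let N be a 1-nested hybridization network, let h be a hybrid node with cluster {i}, let K be its reticulation cycle with split node u, and let x and y be intermediate nodes lying on different merge paths of K. Then C(x) ∩ C(y) = {i}. -/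
namespace Stmt12Aux

variable {V : Type*} {E : V → V → Prop}

lemma getLast?_mem' {l : List V} {a : V} (h : l.getLast? = some a) : a ∈ l := by
  cases l with
  | nil => simp at h
  | cons b t =>
    rw [List.getLast?_eq_getLast (l := b :: t) (by simp)] at h
    simp only [Option.some.injEq] at h
    exact h ▸ List.getLast_mem (by simp)

lemma head_reaches_mem {l : List V} (hc : l.Chain' E) {a v : V} (hh : l.head? = some a)
    (hv : v ∈ l) : Relation.ReflTransGen E a v := by
  induction l generalizing a with
  | nil => simp at hv
  | cons b t ih =>
    simp only [List.head?_cons, Option.some.injEq] at hh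
    subst hh
    rcases List.mem_cons.mp hv with rfl | hv'
    · exact .refl
    · cases t with
      | nil => simp at hv'
      | cons c t' =>
        exact (Relation.ReflTransGen.single (List.isChain_cons_cons.mp hc).1).trans
          (ih (List.isChain_cons_cons.mp hc).2 rfl hv')

lemma mem_reaches_last {l : List V} (hc : l.Chain' E) {v b : V} (hv : v ∈ l)
    (hl : l.getLast? = some b) : Relation.ReflTransGen E v b := by
  induction l generalizing v with
  | nil => simp at hv
  | cons c t ih =>
    cases t with
    | nil =>
      simp only [List.mem_singleton] at hv
      simp only [List.getLast?_singleton, Option.some.injEq] at hl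
      subst hv; subst hl; exact .refl
    | cons d t' =>
      have hl' : (d :: t').getLast? = some b := by rwa [List.getLast?_cons_cons] at hl
      rcases List.mem_cons.mp hv with rfl | hv'
      · exact (Relation.ReflTransGen.single (List.isChain_cons_cons.mp hc).1).trans
          (ih (List.isChain_cons_cons.mp hc).2 (by simp) hl')
      · exact ih (List.isChain_cons_cons.mp hc).2 hv' hl'

lemma chain'_nodup (hacyc : ∀ v, ¬ Relation.TransGen E v v) {l : List V}
    (hc : l.Chain' E) : l.Nodup := by
  induction l with
  | nil => simp
  | cons a t ih =>
    rw [List.nodup_cons]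
    refine ⟨?_, ih hc.tail⟩
    intro ha
    cases t with
    | nil => simp at ha
    | cons c t' =>
      have h1 : E a c := (List.isChain_cons_cons.mp hc).1
      have h2 : Relation.ReflTransGen E c a :=
        head_reaches_mem (List.isChain_cons_cons.mp hc).2 rfl ha
      exact hacyc c (Relation.TransGen.trans_right h2 (Relation.TransGen.single h1))

lemma exists_first_split (P : V → Prop) {l : List V} (hex : ∃ v ∈ l, P v) :
    ∃ l₁ v l₂, l = l₁ ++ v :: l₂ ∧ P v ∧ ∀ z ∈ l₁, ¬ P z := by
  induction l with
  | nil => obtain ⟨v, hv, _⟩ := hex; simp at hv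
  | cons a t ih =>
    by_cases ha : P a
    · exact ⟨[], a, t, rfl, ha, by simp⟩
    · obtain ⟨v, hv, hPv⟩ := hex
      have hex' : ∃ v ∈ t, P v := by
        rcases List.mem_cons.mp hv with rfl | hv'
        · exact absurd hPv ha
        · exact ⟨v, hv', hPv⟩
      obtain ⟨l₁, w, l₂, heq, hPw, hmin⟩ := ih hex'
      refine ⟨a :: l₁, w, l₂, by rw [heq]; rfl, hPw, ?_⟩
      intro z hz
      rcases List.mem_cons.mp hz with rfl | hz'
      · exact ha
      · exact hmin z hz'

lemma walk_of_reflTransGen {a b : V} (hab : Relation.ReflTransGen E a b) :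
    ∃ l : List V, l.Chain' E ∧ l.head? = some a ∧ l.getLast? = some b := by
  induction hab with
  | refl => exact ⟨[a], List.isChain_singleton a, rfl, rfl⟩
  | tail hab hcd ih =>
    obtain ⟨l, hc, hh, hl⟩ := ih
    refine ⟨l ++ [_], ?_, ?_, List.getLast?_concat (l := l)⟩
    · refine List.isChain_append.mpr ⟨hc, List.isChain_singleton _, ?_⟩
      intro x hx y hy
      simp only [List.head?_cons, Option.mem_def, Option.some.injEq] at hy
      subst hy
      rw [hl] at hx
      simp only [Option.mem_def, Option.some.injEq] at hx
      subst hx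
      exact hcd
    · cases l with
      | nil => simp at hh
      | cons e t => simpa using hh

lemma head?_append_cons (t₁ : List V) (v : V) (t₂ t₂' : List V) :
    (t₁ ++ v :: t₂).head? = (t₁ ++ v :: t₂').head? := by cases t₁ <;> simp


lemma extend_walk {p : List V} {u x w : V} (hp : p.Chain' E) (hph : p.head? = some u)
    (hx : x ∈ internals p) (hxw : Relation.ReflTransGen E x w) :
    ∃ (p1 : V) (F : List V), F.Chain' E ∧ F.head? = some u ∧ F.getLast? = some w ∧
      F.tail.head? = some p1 ∧ p1 ∈ internals p ∧ (u, p1) ∈ arcsOf p := by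
  obtain ⟨pt, rfl⟩ : ∃ pt, p = u :: pt := by
    cases p with
    | nil => simp at hph
    | cons a t => simp only [List.head?_cons, Option.some.injEq] at hph; exact ⟨t, by rw [hph]⟩
  have hxpt : x ∈ pt.dropLast := hx
  obtain ⟨p1, pt', rfl⟩ : ∃ p1 pt', pt = p1 :: pt' := by
    cases pt with
    | nil => simp at hxpt
    | cons a t => exact ⟨a, t, rfl⟩
  have hpt' : pt' ≠ [] := by
    intro h; subst h; simp at hxpt
  obtain ⟨c, rest, rfl⟩ : ∃ c rest, pt' = c :: rest := by
    cases pt' with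
    | nil => exact absurd rfl hpt'
    | cons a t => exact ⟨a, t, rfl⟩
  have hp1int : p1 ∈ internals (u :: p1 :: c :: rest) := by
    simp [internals]
  have hp1arc : (u, p1) ∈ arcsOf (u :: p1 :: c :: rest) := by
    simp [arcsOf]
  obtain ⟨d₁, d₂, hd⟩ := List.append_of_mem (List.dropLast_subset _ hxpt)
  obtain ⟨A, hAc, hAh, hAl⟩ := walk_of_reflTransGen hxw
  obtain ⟨at', rfl⟩ : ∃ at', A = x :: at' := by
    cases A with
    | nil => simp at hAh
    | cons a t => simp only [List.head?_cons, Option.some.injEq] at hAh; exact ⟨t, by rw [hAh]⟩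
  refine ⟨p1, (u :: d₁) ++ (x :: at'), ?_, ?_, ?_, ?_, hp1int, hp1arc⟩
  · have hsplit : (u :: p1 :: c :: rest) = (u :: d₁) ++ (x :: d₂) := by rw [hd]; rfl
    obtain ⟨c1, _, link0⟩ := List.isChain_append.mp (hsplit ▸ hp)
    exact List.isChain_append.mpr ⟨c1, hAc, fun a ha b hb => by
      simp only [List.head?_cons, Option.mem_def, Option.some.injEq] at hb
      subst hb
      exact link0 a ha x (by simp)⟩
  · rfl
  · rw [List.getLast?_append_of_ne_nil _ (by simp)]
    exact hAl
  · show (d₁ ++ (x :: at')).head? = some p1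
    rw [head?_append_cons d₁ x at' d₂, ← hd]
    rfl


lemma arc_head {P : List V} {u p1 : V} (h0 : P.head? = some u) (h1 : P.tail.head? = some p1) :
    (u, p1) ∈ arcsOf P := by
  cases P with
  | nil => simp at h0
  | cons a t =>
    cases t with
    | nil => simp at h1
    | cons b t' =>
      simp only [List.head?_cons, List.tail_cons, Option.some.injEq] at h0 h1
      subst h0; subst h1
      simp [arcsOf]

lemma meeting [Fintype V] (hacyc : ∀ v, ¬ Relation.TransGen E v v)
    {F G : List V} {u w p1 q1 : V}
    (hFc : F.Chain' E) (hFh : F.head? = some u) (hFl : F.getLast? = some w)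
    (hGc : G.Chain' E) (hGh : G.head? = some u) (hGl : G.getLast? = some w)
    (hF1 : F.tail.head? = some p1) (hG1 : G.tail.head? = some q1)
    (hpq : p1 ≠ q1) :
    ∃ w' P' Q', RetCycleAt E u w' P' Q' ∧ 2 ≤ inDeg E w' ∧
      Relation.ReflTransGen E w' w ∧ P'.tail.head? = some p1 ∧ Q'.tail.head? = some q1 := by
  obtain ⟨Ft, rfl⟩ : ∃ t, F = u :: t := by
    cases F with
    | nil => simp at hFh
    | cons a t => simp only [List.head?_cons, Option.some.injEq] at hFh; exact ⟨t, by rw [hFh]⟩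
  obtain ⟨Gt, rfl⟩ : ∃ t, G = u :: t := by
    cases G with
    | nil => simp at hGh
    | cons a t => simp only [List.head?_cons, Option.some.injEq] at hGh; exact ⟨t, by rw [hGh]⟩
  have hndF := chain'_nodup hacyc hFc
  have hndG := chain'_nodup hacyc hGc
  have huF : u ∉ Ft := (List.nodup_cons.mp hndF).1
  have huG : u ∉ Gt := (List.nodup_cons.mp hndG).1
  have hwF : w ∈ Ft := by
    cases Ft with
    | nil => simp at hF1
    | cons a t => rw [List.getLast?_cons_cons] at hFl; exact getLast?_mem' hFl
  have hwG : w ∈ Gt := by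
    cases Gt with
    | nil => simp at hG1
    | cons a t => rw [List.getLast?_cons_cons] at hGl; exact getLast?_mem' hGl
  obtain ⟨t₁, w', t₂, hFt_eq, hw'G, hminF⟩ := exists_first_split (· ∈ Gt) ⟨w, hwF, hwG⟩
  obtain ⟨s₁, w'', s₂, hGt_eq, hw''eq, hminG⟩ := exists_first_split (· = w') ⟨w', hw'G, rfl⟩
  rw [hw''eq] at hGt_eq
  -- the two merge paths of the new cycle
  have hPc : (u :: (t₁ ++ [w'])).Chain' E :=
    hFc.prefix ⟨t₂, by rw [hFt_eq]; simp⟩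
  have hQc : (u :: (s₁ ++ [w'])).Chain' E :=
    hGc.prefix ⟨s₂, by rw [hGt_eq]; simp⟩
  have hPl : (u :: (t₁ ++ [w'])).getLast? = some w' := List.getLast?_concat (l := u :: t₁)
  have hQl : (u :: (s₁ ++ [w'])).getLast? = some w' := List.getLast?_concat (l := u :: s₁)
  have hP1 : (u :: (t₁ ++ [w'])).tail.head? = some p1 := by
    have h' : Ft.head? = some p1 := hF1
    rw [hFt_eq] at h'
    show (t₁ ++ [w']).head? = some p1
    rw [head?_append_cons t₁ w' [] t₂]
    exact h'
  have hQ1 : (u :: (s₁ ++ [w'])).tail.head? = some q1 := by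
    have h' : Gt.head? = some q1 := hG1
    rw [hGt_eq] at h'
    show (s₁ ++ [w']).head? = some q1
    rw [head?_append_cons s₁ w' [] s₂]
    exact h'
  have hPQne : (u :: (t₁ ++ [w'])) ≠ (u :: (s₁ ++ [w'])) := by
    intro hEq
    rw [hEq] at hP1
    rw [hP1] at hQ1
    exact hpq (Option.some.injEq _ _ ▸ hQ1 : p1 = q1)
  have hintP : internals (u :: (t₁ ++ [w'])) = t₁ := by
    simp [internals, List.dropLast_concat]
  have hintQ : internals (u :: (s₁ ++ [w'])) = s₁ := by
    simp [internals, List.dropLast_concat]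
  have hint : ∀ z ∈ internals (u :: (t₁ ++ [w'])), z ∉ internals (u :: (s₁ ++ [w'])) := by
    intro z hz hzQ
    rw [hintP] at hz
    rw [hintQ] at hzQ
    exact hminF z hz (by rw [hGt_eq]; exact List.mem_append_left _ hzQ)
  -- two distinct in-neighbours of w'
  have hPc' : ((u :: t₁) ++ [w']).Chain' E := hPc
  have hQc' : ((u :: s₁) ++ [w']).Chain' E := hQc
  set a := (u :: t₁).getLast (by simp) with ha_def
  set b := (u :: s₁).getLast (by simp) with hb_def
  have hEa : E a w' := by
    refine (List.isChain_append.mp hPc').2.2 a ?_ w' rfl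
    exact List.getLast?_eq_getLast (by simp)
  have hEb : E b w' := by
    refine (List.isChain_append.mp hQc').2.2 b ?_ w' rfl
    exact List.getLast?_eq_getLast (by simp)
  have hamem : t₁ ≠ [] → a ∈ t₁ := by
    intro h; rw [ha_def, List.getLast_cons h]; exact List.getLast_mem h
  have hbmem : s₁ ≠ [] → b ∈ s₁ := by
    intro h; rw [hb_def, List.getLast_cons h]; exact List.getLast_mem h
  have hab : a ≠ b := by
    rcases eq_or_ne t₁ [] with h1 | h1
    · rcases eq_or_ne s₁ [] with h2 | h2
      · exfalso
        apply hpq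
        subst h1; subst h2
        simp only [List.nil_append, List.tail_cons, List.head?_cons, Option.some.injEq] at hP1 hQ1
        rw [← hP1, ← hQ1]
      · have hb' : b ∈ s₁ := hbmem h2
        have ha' : a = u := by subst h1; simp [ha_def]
        intro hEq
        apply huG
        rw [hGt_eq]
        exact List.mem_append_left _ (by rw [← ha', hEq]; exact hb')
    · have ha' : a ∈ t₁ := hamem h1
      have haG : a ∉ Gt := hminF a ha'
      rcases eq_or_ne s₁ [] with h2 | h2
      · have hb' : b = u := by subst h2; simp [hb_def]
        intro hEq
        apply huF
        rw [hFt_eq]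
        exact List.mem_append_left _ (by rw [← hb', ← hEq]; exact ha')
      · intro hEq
        apply haG
        rw [hGt_eq]
        exact List.mem_append_left _ (hEq ▸ hbmem h2)
  have hdeg : 2 ≤ inDeg E w' := by
    have hnt : Nontrivial {v // E v w'} := ⟨⟨a, hEa⟩, ⟨b, hEb⟩, by simpa using hab⟩
    exact Finite.one_lt_card_iff_nontrivial.mpr hnt
  have hw'w : Relation.ReflTransGen E w' w := by
    refine mem_reaches_last hFc ?_ hFl
    rw [hFt_eq]
    exact List.mem_cons_of_mem _ (List.mem_append_right _ List.mem_cons_self)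
  exact ⟨w', u :: (t₁ ++ [w']), u :: (s₁ ++ [w']),
    ⟨⟨hPc, rfl, hPl⟩, ⟨hQc, rfl, hQl⟩, hPQne, hint⟩, hdeg, hw'w, hP1, hQ1⟩

end Stmt12Aux

/-- In a 1-nested hybridization network, if `h` is a hybrid node with cluster
`{i}` and `x`, `y` are intermediate nodes in different merge paths of its
reticulation cycle, then the intersection of their clusters is `{i}`. -/

theorem stmt12 {V : Type*} [Fintype V] (E : V → V → Prop) (r : V)
    (hacyc : ∀ v, ¬ Relation.TransGen E v v)
    (hroot : ∀ v, Relation.ReflTransGen E r v)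
    (hin2 : ∀ v, inDeg E v ≤ 2)
    (hnod1 : ∀ v, inDeg E v ≤ 1 → outDeg E v ≠ 1)
    (hnested : OneNested E)
    (u h i : V) (p q : List V)
    (hhyb : 2 ≤ inDeg E h)
    (hK : RetCycleAt E u h p q)
    (hcl : cluster E h = {i})
    (x y : V) (hx : x ∈ internals p) (hy : y ∈ internals q) :
    cluster E x ∩ cluster E y = {i} := by
  obtain ⟨⟨hpc, hph, hpl⟩, ⟨hqc, hqh, hql⟩, hKne, hKdisj⟩ := hK
  ext l
  simp only [Set.mem_inter_iff, Set.mem_singleton_iff, cluster, Set.mem_setOf_eq]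
  constructor
  · rintro ⟨⟨hleaf, hxl⟩, -, hyl⟩
    obtain ⟨p1, F, hFc, hFh, hFl, hF1, hp1int, hp1arc⟩ := Stmt12Aux.extend_walk hpc hph hx hxl
    obtain ⟨q1, G, hGc, hGh, hGl, hG1, hq1int, hq1arc⟩ := Stmt12Aux.extend_walk hqc hqh hy hyl
    have hpq1 : p1 ≠ q1 := fun hEq => hKdisj p1 hp1int (hEq ▸ hq1int)
    obtain ⟨w', P', Q', hRC, hdeg, hw'l, hP1, hQ1⟩ :=
      Stmt12Aux.meeting hacyc hFc hFh hFl hGc hGh hGl hF1 hG1 hpq1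
    have key : u = u ∧ h = w' ∧ ({p, q} : Set (List V)) = {P', Q'} := by
      by_contra hcon
      exact hnested u h p q u w' P' Q' hhyb hdeg
        ⟨⟨hpc, hph, hpl⟩, ⟨hqc, hqh, hql⟩, hKne, hKdisj⟩ hRC hcon
        (u, p1) (List.mem_append.mpr (Or.inl hp1arc))
        (List.mem_append.mpr (Or.inl (Stmt12Aux.arc_head hRC.1.2.1 hP1)))
    have hl : l ∈ cluster E h := ⟨hleaf, by rw [key.2.1]; exact hw'l⟩
    rw [hcl] at hl
    exact hl
  · rintro rfl
    have hi : l ∈ cluster E h := by rw [hcl]; rfl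
    obtain ⟨hileaf, hhi⟩ := hi
    have hxp : x ∈ p := List.tail_subset p (List.dropLast_subset _ hx)
    have hyq : y ∈ q := List.tail_subset q (List.dropLast_subset _ hy)
    exact ⟨⟨hileaf, (Stmt12Aux.mem_reaches_last hpc hxp hpl).trans hhi⟩,
           hileaf, (Stmt12Aux.mem_reaches_last hqc hyq hql).trans hhi⟩
end

section
/- Every 1-nested hybridization network with more than one node contains either an internal tree node all of whose children are tree leaves, or a hybrid node h all of whose children are tree leaves such that every intermediate node of the reticulation cycle for h has all its children outside the cycle being tree leaves. -/
namespace Stmt15Aux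

variable {V : Type*} {E : V → V → Prop}

@[simp] lemma arcsOf_nil : arcsOf ([] : List V) = [] := rfl
@[simp] lemma arcsOf_single (a : V) : arcsOf [a] = [] := rfl
@[simp] lemma arcsOf_cons₂ (a b : V) (l : List V) :
    arcsOf (a :: b :: l) = (a, b) :: arcsOf (b :: l) := by
  simp [arcsOf]

lemma mem_arcsOf_iff {a b : V} {l : List V} :
    (a, b) ∈ arcsOf l ↔ ∃ l₁ l₂, l = l₁ ++ a :: b :: l₂ := by
  constructor
  · intro hmem
    induction l with
    | nil => simp at hmem
    | cons x xs ih =>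
      cases xs with
      | nil => simp at hmem
      | cons y ys =>
        rw [arcsOf_cons₂] at hmem
        rcases List.mem_cons.mp hmem with heq | hmem'
        · obtain ⟨rfl, rfl⟩ : x = a ∧ y = b := by
            constructor <;> { injection heq with h1 h2; first | exact h1.symm | exact h2.symm }
          exact ⟨[], ys, rfl⟩
        · obtain ⟨l₁, l₂, hdec⟩ := ih hmem'
          exact ⟨x :: l₁, l₂, by rw [List.cons_append, hdec]⟩
  · rintro ⟨l₁, l₂, rfl⟩
    induction l₁ with
    | nil => simp
    | cons c l₁' ih =>
      rw [List.cons_append]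
      cases hl : l₁' ++ a :: b :: l₂ with
      | nil => simp at hl
      | cons d ds =>
        rw [hl] at ih
        rw [arcsOf_cons₂]
        exact List.mem_cons.mpr (Or.inr ih)

lemma mem_left_of_arc {a b : V} {l : List V} (h : (a, b) ∈ arcsOf l) : a ∈ l := by
  obtain ⟨l₁, l₂, rfl⟩ := mem_arcsOf_iff.mp h; simp

lemma mem_right_of_arc {a b : V} {l : List V} (h : (a, b) ∈ arcsOf l) : b ∈ l := by
  obtain ⟨l₁, l₂, rfl⟩ := mem_arcsOf_iff.mp h; simp

lemma chain'_suffix {l₁ l₂ : List V} (h : List.Chain' E (l₁ ++ l₂)) : List.Chain' E l₂ :=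
  (List.isChain_append.mp h).2.1

lemma rel_of_arc {a b : V} {l : List V} (hc : List.Chain' E l) (h : (a, b) ∈ arcsOf l) :
    E a b := by
  obtain ⟨l₁, l₂, rfl⟩ := mem_arcsOf_iff.mp h
  have := chain'_suffix (E := E) hc
  exact (List.isChain_cons_cons.mp this).1

lemma transGen_of_chain' : ∀ {l : List V} {a b : V},
    List.Chain' E (a :: l) → b ∈ l → Relation.TransGen E a b := by
  intro l
  induction l with
  | nil => intro a b _ hb; simp at hb
  | cons c cs ih =>
    intro a b hc hb
    have h1 : E a c := (List.isChain_cons_cons.mp hc).1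
    have h2 : List.Chain' E (c :: cs) := (List.isChain_cons_cons.mp hc).2
    rcases List.mem_cons.mp hb with rfl | hb'
    · exact Relation.TransGen.single h1
    · exact Relation.TransGen.head h1 (ih h2 hb')

lemma reflTransGen_of_chain' {l : List V} {a b : V}
    (hc : List.Chain' E (a :: l)) (hb : b ∈ a :: l) : Relation.ReflTransGen E a b := by
  rcases List.mem_cons.mp hb with rfl | hb'
  · exact Relation.ReflTransGen.refl
  · exact (transGen_of_chain' hc hb').to_reflTransGen

lemma nodup_of_chain' (hacyc : ∀ v, ¬ Relation.TransGen E v v) :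
    ∀ {l : List V}, List.Chain' E l → l.Nodup := by
  intro l
  induction l with
  | nil => intro; simp
  | cons a t ih =>
    intro hc
    rw [List.nodup_cons]
    refine ⟨fun hmem => hacyc a (transGen_of_chain' hc hmem), ih hc.tail⟩

lemma mem_of_getLast? {l : List V} {a : V} (h : l.getLast? = some a) : a ∈ l := by
  cases l with
  | nil => simp at h
  | cons x xs =>
    have hne : x :: xs ≠ [] := by simp
    rw [List.getLast?_eq_getLast hne] at h
    injection h with h
    rw [← h]; exact List.getLast_mem hne

lemma head_eq_of_walk {l : List V} {u v : V} (h : IsWalk E l u v) :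
    ∃ t, l = u :: t := by
  cases l with
  | nil => simp [IsWalk] at h
  | cons x xs =>
    obtain ⟨-, h2, -⟩ := h
    simp at h2
    exact ⟨xs, by rw [h2]⟩

lemma mem_head_of_walk {l : List V} {u v : V} (h : IsWalk E l u v) : u ∈ l := by
  obtain ⟨t, rfl⟩ := head_eq_of_walk h; simp

lemma mem_last_of_walk {l : List V} {u v : V} (h : IsWalk E l u v) : v ∈ l :=
  mem_of_getLast? h.2.2

lemma rtg_head_of_walk {l : List V} {u v a : V} (h : IsWalk E l u v) (ha : a ∈ l) :
    Relation.ReflTransGen E u a := by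
  obtain ⟨t, rfl⟩ := head_eq_of_walk h
  exact reflTransGen_of_chain' h.1 ha

lemma transGen_head_of_walk {l : List V} {u v a : V} (h : IsWalk E l u v) (ha : a ∈ l)
    (hne : a ≠ u) : Relation.TransGen E u a := by
  obtain ⟨t, rfl⟩ := head_eq_of_walk h
  rcases List.mem_cons.mp ha with rfl | ha'
  · exact absurd rfl hne
  · exact transGen_of_chain' h.1 ha'

lemma getLast?_append_right {l₁ l₂ : List V} (h : l₂ ≠ []) :
    (l₁ ++ l₂).getLast? = l₂.getLast? := by
  rw [List.getLast?_append]
  cases hl : l₂.getLast? with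
  | none => exact absurd (List.getLast?_eq_none_iff.mp hl) h
  | some a => rfl

lemma suffix_walk {l₁ l₂ : List V} {u v a : V} (h : IsWalk E (l₁ ++ a :: l₂) u v) :
    IsWalk E (a :: l₂) a v := by
  refine ⟨chain'_suffix h.1, by simp, ?_⟩
  rw [← getLast?_append_right (l₁ := l₁) (by simp)]
  exact h.2.2

lemma rtg_last_of_walk {l : List V} {u v a : V} (h : IsWalk E l u v) (ha : a ∈ l) :
    Relation.ReflTransGen E a v := by
  obtain ⟨s, t, rfl⟩ := List.append_of_mem ha
  have hw := suffix_walk h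
  exact reflTransGen_of_chain' hw.1 (mem_of_getLast? hw.2.2)

lemma exists_walk {u v : V} (h : Relation.ReflTransGen E u v) :
    ∃ l, IsWalk E l u v := by
  induction h with
  | refl => exact ⟨[u], by simp [IsWalk]; exact List.isChain_singleton u⟩
  | @tail b c hub hbc ih =>
    obtain ⟨l, hl⟩ := ih
    obtain ⟨t, rfl⟩ := head_eq_of_walk hl
    refine ⟨(u :: t) ++ [c], ?_, by simp, List.getLast?_concat⟩
    show List.IsChain E _; rw [List.isChain_append]
    refine ⟨hl.1, by simp, ?_⟩
    intro x hx y hy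
    simp at hy
    rw [hl.2.2] at hx
    simp at hx
    cases hx; cases hy; exact hbc

lemma exists_pred {l : List V} {u v a : V} (h : IsWalk E l u v) (ha : a ∈ l)
    (hne : a ≠ u) : ∃ e, (e, a) ∈ arcsOf l ∧ E e a := by
  obtain ⟨t, rfl⟩ := head_eq_of_walk h
  have ha' : a ∈ t := by
    rcases List.mem_cons.mp ha with rfl | h'
    · exact absurd rfl hne
    · exact h'
  obtain ⟨t₁, t₂, rfl⟩ := List.append_of_mem ha'
  have hs : u :: (t₁ ++ a :: t₂) = (u :: t₁) ++ a :: t₂ := by simp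
  have hne' : (u :: t₁ : List V) ≠ [] := by simp
  set s := u :: t₁ with hsdef
  obtain ⟨e, hedec⟩ : ∃ e, s = s.dropLast ++ [e] :=
    ⟨s.getLast hne', (List.dropLast_append_getLast hne').symm⟩
  have hdec : u :: (t₁ ++ a :: t₂) = s.dropLast ++ e :: a :: t₂ := by
    rw [hs, hedec]; simp
  have harc : (e, a) ∈ arcsOf (u :: (t₁ ++ a :: t₂)) :=
    mem_arcsOf_iff.mpr ⟨s.dropLast, t₂, hdec⟩
  exact ⟨e, harc, rel_of_arc h.1 harc⟩

lemma arc_pred_unique {l : List V} {a b v : V} (hnd : l.Nodup)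
    (h1 : (a, v) ∈ arcsOf l) (h2 : (b, v) ∈ arcsOf l) : a = b := by
  induction l with
  | nil => simp at h1
  | cons x xs ih =>
    cases xs with
    | nil => simp at h1
    | cons y ys =>
      rw [arcsOf_cons₂] at h1 h2
      have hy_notin : y ∉ ys := by
        have := (List.nodup_cons.mp hnd).2
        exact (List.nodup_cons.mp this).1
      have haux : ∀ c : V, (c, y) ∈ arcsOf (y :: ys) → False := by
        intro c hc
        obtain ⟨l₁, l₂, hdec⟩ := mem_arcsOf_iff.mp hc
        cases l₁ with
        | nil =>
          simp at hdec
          exact hy_notin (by rw [hdec.2]; simp)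
        | cons z zs =>
          have : y :: ys = z :: (zs ++ c :: y :: l₂) := by simpa using hdec
          injection this with h1' h2'
          exact hy_notin (by rw [h2']; simp)
      rcases List.mem_cons.mp h1 with heq1 | hm1 <;> rcases List.mem_cons.mp h2 with heq2 | hm2
      · injection heq1 with e1 e2; injection heq2 with e3 e4; rw [e1, e3]
      · injection heq1 with e1 e2
        exact absurd (e2 ▸ hm2) (fun hc => haux b hc)
      · injection heq2 with e1 e2
        exact absurd (e2 ▸ hm1) (fun hc => haux a hc)
      · exact ih (List.nodup_cons.mp hnd).2 hm1 hm2

lemma arc_src_ne_last {l : List V} {a b v : V} (hnd : l.Nodup)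
    (h : (a, b) ∈ arcsOf l) (hl : l.getLast? = some v) : a ≠ v := by
  obtain ⟨l₁, l₂, rfl⟩ := mem_arcsOf_iff.mp h
  have hsub : (a :: b :: l₂).Nodup := (hnd.sublist (by simp))
  have hnotin : a ∉ b :: l₂ := (List.nodup_cons.mp hsub).1
  rw [getLast?_append_right (by simp)] at hl
  have : v ∈ a :: b :: l₂ := mem_of_getLast? hl
  rcases List.mem_cons.mp this with rfl | hmem
  · -- v = a : then getLast of (a::b::l₂) is a, but a ∉ b::l₂; last is in b::l₂
    have : v ∈ b :: l₂ := by
      have h2 : (b :: l₂ : List V) ≠ [] := by simp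
      rw [show (v :: b :: l₂ : List V) = [v] ++ b :: l₂ from rfl,
        getLast?_append_right h2] at hl
      exact mem_of_getLast? hl
    exact fun _ => hnotin this
  · intro heq; rw [heq] at hnotin; exact hnotin hmem

lemma exists_first {B : V → Prop} : ∀ {l : List V}, (∃ v ∈ l, B v) →
    ∃ l₁ z l₂, l = l₁ ++ z :: l₂ ∧ B z ∧ ∀ v ∈ l₁, ¬ B v := by
  intro l
  induction l with
  | nil => rintro ⟨v, hv, -⟩; simp at hv
  | cons a t ih =>
    intro hex
    by_cases hBa : B a
    · exact ⟨[], a, t, rfl, hBa, by simp⟩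
    · obtain ⟨v, hv, hBv⟩ := hex
      have hvt : v ∈ t := by
        rcases List.mem_cons.mp hv with rfl | h'
        · exact absurd hBv hBa
        · exact h'
      obtain ⟨l₁, z, l₂, hdec, hBz, hl₁⟩ := ih ⟨v, hvt, hBv⟩
      refine ⟨a :: l₁, z, l₂, by rw [List.cons_append, hdec], hBz, ?_⟩
      intro w hw
      rcases List.mem_cons.mp hw with rfl | h'
      · exact hBa
      · exact hl₁ w h'

lemma singleton_of_walk_self (hacyc : ∀ v, ¬ Relation.TransGen E v v)
    {l : List V} {u : V} (h : IsWalk E l u u) : l = [u] := by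
  obtain ⟨t, rfl⟩ := head_eq_of_walk h
  cases t with
  | nil => rfl
  | cons y ys =>
    exfalso
    have h2 : (u :: y :: ys).getLast? = some u := h.2.2
    have hne : (y :: ys : List V) ≠ [] := by simp
    rw [show (u :: y :: ys : List V) = [u] ++ y :: ys from rfl,
      getLast?_append_right hne] at h2
    exact hacyc u (transGen_of_chain' h.1 (mem_of_getLast? h2))

end Stmt15Aux


section Part2

namespace Stmt15Aux

variable {V : Type*} {E : V → V → Prop}

lemma two_le_inDeg_iff [Fintype V] {v : V} :
    2 ≤ inDeg E v ↔ ∃ a b, a ≠ b ∧ E a v ∧ E b v := by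
  classical
  rw [inDeg, Nat.card_eq_fintype_card]
  rw [show (2 : ℕ) ≤ Fintype.card {u // E u v} ↔ 1 < Fintype.card {u // E u v} from Iff.rfl,
    Fintype.one_lt_card_iff]
  constructor
  · rintro ⟨⟨a, ha⟩, ⟨b, hb⟩, hne⟩
    exact ⟨a, b, fun h => hne (by simp [Subtype.ext_iff, h]), ha, hb⟩
  · rintro ⟨a, b, hne, ha, hb⟩
    exact ⟨⟨a, ha⟩, ⟨b, hb⟩, by simp [Subtype.ext_iff, hne]⟩

lemma exists_other_parent [Fintype V] {v c : V} (h2 : 2 ≤ inDeg E v) (hc : E c v) :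
    ∃ d, d ≠ c ∧ E d v := by
  obtain ⟨a, b, hne, ha, hb⟩ := two_le_inDeg_iff.mp h2
  by_cases hac : a = c
  · exact ⟨b, by rw [← hac]; exact hne.symm, hb⟩
  · exact ⟨a, hac, ha⟩

lemma parent_mem_pair [Fintype V] {v u₁ u₂ e : V} (hle : inDeg E v ≤ 2)
    (h₁ : E u₁ v) (h₂ : E u₂ v) (hne : u₁ ≠ u₂) (he : E e v) : e = u₁ ∨ e = u₂ := by
  classical
  by_contra hcon
  push_neg at hcon
  have h3 : 2 < Fintype.card {u // E u v} :=
    Fintype.two_lt_card_iff.mpr ⟨⟨e, he⟩, ⟨u₁, h₁⟩, ⟨u₂, h₂⟩,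
      by simp [Subtype.ext_iff, hcon.1, hcon.2, hne]⟩
  rw [inDeg, Nat.card_eq_fintype_card] at hle
  omega

lemma exists_succ_of_outDeg_ne_zero [Fintype V] {v : V} (h : outDeg E v ≠ 0) :
    ∃ w, E v w := by
  rw [outDeg] at h
  obtain ⟨⟨w, hw⟩⟩ := (Nat.card_ne_zero.mp h).1
  exact ⟨w, hw⟩

lemma wf_transGen [Finite V] (hacyc : ∀ v, ¬ Relation.TransGen E v v) :
    WellFounded (Relation.TransGen E) := by
  haveI : IsTrans V (Relation.TransGen E) := ⟨fun _ _ _ h1 h2 => h1.trans h2⟩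
  haveI : IsIrrefl V (Relation.TransGen E) := ⟨hacyc⟩
  exact Finite.wellFounded_of_trans_of_irrefl _

lemma wf_transGen_flip [Finite V] (hacyc : ∀ v, ¬ Relation.TransGen E v v) :
    WellFounded (fun a b : V => Relation.TransGen E b a) := by
  haveI : IsTrans V (fun a b : V => Relation.TransGen E b a) := ⟨fun _ _ _ h1 h2 => h2.trans h1⟩
  haveI : IsIrrefl V (fun a b : V => Relation.TransGen E b a) := ⟨hacyc⟩
  exact Finite.wellFounded_of_trans_of_irrefl _

/-- Construction of a reticulation cycle from two distinct parents, with the split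
inside a downward-closed set `S`. -/
lemma exists_retCycle {S : Set V} (hS : ∀ a b, a ∈ S → E a b → b ∈ S)
    {c₁ c₂ t s₀ : V} (hne : c₁ ≠ c₂) (e₁ : E c₁ t) (e₂ : E c₂ t)
    (hs₀ : s₀ ∈ S) (hw₁ : Relation.ReflTransGen E s₀ c₁)
    (hw₂ : Relation.ReflTransGen E s₀ c₂) :
    ∃ s P Q, s ∈ S ∧ RetCycleAt E s t P Q ∧ (c₁, t) ∈ arcsOf P ∧ (c₂, t) ∈ arcsOf Q := by
  classical
  set Fam : V → List V → List V → Prop :=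
    fun s A B => s ∈ S ∧ IsWalk E A s c₁ ∧ IsWalk E B s c₂ with hFamDef
  have hfam0 : ∃ s A B, Fam s A B := by
    obtain ⟨A, hA⟩ := exists_walk hw₁
    obtain ⟨B, hB⟩ := exists_walk hw₂
    exact ⟨s₀, A, B, hs₀, hA, hB⟩
  set N : Set ℕ := {n | ∃ s A B, Fam s A B ∧ A.length + B.length = n} with hN
  have hNne : N.Nonempty := by
    obtain ⟨s, A, B, hF⟩ := hfam0
    exact ⟨A.length + B.length, s, A, B, hF, rfl⟩
  obtain ⟨s, A, B, hF, hlen⟩ := Nat.sInf_mem hNne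
  have hmin : ∀ s' A' B', Fam s' A' B' → A.length + B.length ≤ A'.length + B'.length := by
    intro s' A' B' hF'
    rw [hlen]
    exact Nat.sInf_le ⟨s', A', B', hF', rfl⟩
  obtain ⟨hsS, hwA, hwB⟩ := hF
  -- all elements of A and B are in S
  have hmemS : ∀ (l : List V) (c : V), IsWalk E l s c → ∀ a ∈ l, a ∈ S := by
    intro l c hw a ha
    have := rtg_head_of_walk hw ha
    clear hw ha
    induction this with
    | refl => exact hsS
    | tail _ hbc ih => exact hS _ _ ih hbc
  -- decompositions
  have hAne : A ≠ [] := by obtain ⟨tA, rfl⟩ := head_eq_of_walk hwA; simp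
  have hBne : B ≠ [] := by obtain ⟨tB, rfl⟩ := head_eq_of_walk hwB; simp
  have hAdec : A = A.dropLast ++ [c₁] := by
    have h0 := List.dropLast_append_getLast hAne
    have h1 := hwA.2.2
    rw [List.getLast?_eq_getLast hAne] at h1
    have h2 : A.getLast hAne = c₁ := by injection h1
    rw [← h2]; exact h0.symm
  have hBdec : B = B.dropLast ++ [c₂] := by
    have h0 := List.dropLast_append_getLast hBne
    have h1 := hwB.2.2
    rw [List.getLast?_eq_getLast hBne] at h1
    have h2 : B.getLast hBne = c₂ := by injection h1
    rw [← h2]; exact h0.symm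
  refine ⟨s, A ++ [t], B ++ [t], hsS, ⟨?_, ?_, ?_, ?_⟩, ?_, ?_⟩
  · -- walk P
    refine ⟨?_, ?_, List.getLast?_concat⟩
    · show List.IsChain E _; rw [List.isChain_append]
      refine ⟨hwA.1, by simp, ?_⟩
      intro a ha y hy
      rw [hwA.2.2] at ha
      simp at ha hy
      cases ha; cases hy; exact e₁
    · obtain ⟨tA, rfl⟩ := head_eq_of_walk hwA
      simpa using hwA.2.1
  · -- walk Q
    refine ⟨?_, ?_, List.getLast?_concat⟩
    · show List.IsChain E _; rw [List.isChain_append]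
      refine ⟨hwB.1, by simp, ?_⟩
      intro a ha y hy
      rw [hwB.2.2] at ha
      simp at ha hy
      cases ha; cases hy; exact e₂
    · obtain ⟨tB, rfl⟩ := head_eq_of_walk hwB
      simpa using hwB.2.1
  · -- P ≠ Q
    intro hPQ
    have hAB : A = B := by
      have := congrArg List.dropLast hPQ
      rwa [List.dropLast_concat, List.dropLast_concat] at this
    apply hne
    have h1 := hwA.2.2
    rw [hAB, hwB.2.2] at h1
    injection h1 with h1
    exact h1.symm
  · -- internal disjointness via minimality
    intro y hyP hyQ
    -- internals (A ++ [t]) = A.tail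
    have hint : ∀ (l : List V), l ≠ [] → internals (l ++ [t]) = l.tail := by
      intro l hl
      obtain ⟨a₀, l', rfl⟩ := List.exists_cons_of_ne_nil hl
      show ((a₀ :: l' ++ [t]).tail).dropLast = _
      simp [List.dropLast_concat]
    rw [hint A hAne] at hyP
    rw [hint B hBne] at hyQ
    -- build shorter pair starting at y
    obtain ⟨a₀, A', rfl⟩ := List.exists_cons_of_ne_nil hAne
    obtain ⟨b₀, B', rfl⟩ := List.exists_cons_of_ne_nil hBne
    simp only [List.tail_cons] at hyP hyQ
    obtain ⟨tA₁, tA₂, hA'⟩ := List.append_of_mem hyP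
    obtain ⟨tB₁, tB₂, hB'⟩ := List.append_of_mem hyQ
    have hwA' : IsWalk E (y :: tA₂) y c₁ := by
      have : a₀ :: A' = (a₀ :: tA₁) ++ y :: tA₂ := by rw [hA']; simp
      rw [this] at hwA
      exact suffix_walk hwA
    have hwB' : IsWalk E (y :: tB₂) y c₂ := by
      have : b₀ :: B' = (b₀ :: tB₁) ++ y :: tB₂ := by rw [hB']; simp
      rw [this] at hwB
      exact suffix_walk hwB
    have hyS : y ∈ S := hmemS (a₀ :: A') c₁ hwA y (by rw [hA']; simp)
    have hF' : Fam y (y :: tA₂) (y :: tB₂) := ⟨hyS, hwA', hwB'⟩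
    have := hmin _ _ _ hF'
    have hlenA : (a₀ :: A').length = tA₁.length + 1 + (tA₂.length + 1) := by
      rw [hA']; simp; omega
    have hlenB : (b₀ :: B').length = tB₁.length + 1 + (tB₂.length + 1) := by
      rw [hB']; simp; omega
    simp only [List.length_cons] at this hlenA hlenB
    omega
  · -- (c₁, t) ∈ arcsOf P
    refine mem_arcsOf_iff.mpr ⟨A.dropLast, [], ?_⟩
    conv_lhs => rw [hAdec]
    simp
  · refine mem_arcsOf_iff.mpr ⟨B.dropLast, [], ?_⟩
    conv_lhs => rw [hBdec]
    simp

end Stmt15Aux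



open Stmt15Aux

/-- Every 1-nested hybridization network with more than one node contains either an
internal tree node all of whose children are tree leaves, or a hybrid node all of
whose children are tree leaves and such that all intermediate nodes of its
reticulation cycle have all their children outside the cycle tree leaves. -/
theorem stmt15 {V : Type*} [Fintype V] (E : V → V → Prop) (r : V)
    (hacyc : ∀ v, ¬ Relation.TransGen E v v)
    (hroot : ∀ v, Relation.ReflTransGen E r v)
    (hin2 : ∀ v, inDeg E v ≤ 2)
    (hnod1 : ∀ v, inDeg E v ≤ 1 → outDeg E v ≠ 1)
    (hnested : OneNested E)
    (hcard : 1 < Fintype.card V) :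
    (∃ v : V, inDeg E v ≤ 1 ∧ (∃ w, E v w) ∧
      ∀ w, E v w → outDeg E w = 0 ∧ inDeg E w ≤ 1) ∨
    (∃ (h x : V) (p q : List V),
      2 ≤ inDeg E h ∧ RetCycleAt E x h p q ∧
      (∀ w, E h w → outDeg E w = 0 ∧ inDeg E w ≤ 1) ∧
      ∀ y, (y ∈ internals p ∨ y ∈ internals q) →
        ∀ w, E y w → w ∉ p → w ∉ q → outDeg E w = 0 ∧ inDeg E w ≤ 1) := by

  classical
  by_cases Hesc : ∃ v, (∃ w, E v w) ∧ ∀ u, Relation.ReflTransGen E v u → inDeg E u ≤ 1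
  · left
    obtain ⟨v, ⟨w0, hvw0⟩, hfree⟩ := Hesc
    have hSne : ({u | Relation.ReflTransGen E v u ∧ ∃ w, E u w} : Set V).Nonempty :=
      ⟨v, Relation.ReflTransGen.refl, w0, hvw0⟩
    obtain ⟨m, hmS, hmmin⟩ := (wf_transGen_flip hacyc).has_min _ hSne
    obtain ⟨hvm, wm, hwm⟩ := hmS
    refine ⟨m, hfree m hvm, ⟨wm, hwm⟩, ?_⟩
    intro w hw
    have hrw : Relation.ReflTransGen E v w := hvm.tail hw
    refine ⟨?_, hfree w hrw⟩
    by_contra h0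
    obtain ⟨w', hw'⟩ := exists_succ_of_outDeg_ne_zero h0
    exact hmmin w ⟨hrw, w', hw'⟩ (Relation.TransGen.single hw)
  · right
    push_neg at Hesc
    have Hesc' : ∀ v, (∃ w, E v w) → ∃ u, Relation.ReflTransGen E v u ∧ 2 ≤ inDeg E u := by
      intro v hv
      obtain ⟨u, hu1, hu2⟩ := Hesc v hv
      exact ⟨u, hu1, by omega⟩
    obtain ⟨v₀, hv₀⟩ := Fintype.exists_ne_of_one_lt_card hcard r
    have hrv₀ : Relation.TransGen E r v₀ := by
      rcases Relation.reflTransGen_iff_eq_or_transGen.mp (hroot v₀) with h | h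
      · exact absurd h hv₀
      · exact h
    obtain ⟨z₀, hz₀, -⟩ := Relation.TransGen.head'_iff.mp hrv₀
    obtain ⟨h₀, -, hh₀⟩ := Hesc' r ⟨z₀, hz₀⟩
    have htuple : ∃ x h p q, (2 ≤ inDeg E h ∧ RetCycleAt E x h p q) := by
      obtain ⟨a, b, hab, ha, hb⟩ := two_le_inDeg_iff.mp hh₀
      obtain ⟨s, P, Q, -, hrc, -, -⟩ := exists_retCycle (S := (Set.univ : Set V))
        (fun _ _ _ _ => trivial) hab ha hb (Set.mem_univ r) (hroot a) (hroot b)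
      exact ⟨s, h₀, P, Q, hh₀, hrc⟩
    set μ : V → ℕ := fun s => Nat.card {u | Relation.ReflTransGen E s u} with hμdef
    have hNne : ({n | ∃ x h p q, (2 ≤ inDeg E h ∧ RetCycleAt E x h p q) ∧ μ x = n} :
        Set ℕ).Nonempty := by
      obtain ⟨x, h, p, q, hv⟩ := htuple
      exact ⟨μ x, x, h, p, q, hv, rfl⟩
    obtain ⟨x, h, p, q, ⟨h2, hC⟩, hμx⟩ := Nat.sInf_mem hNne
    have hminμ : ∀ x' h' p' q', 2 ≤ inDeg E h' → RetCycleAt E x' h' p' q' → μ x ≤ μ x' := by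
      intro x' h' p' q' h2' hC'
      rw [hμx]
      exact Nat.sInf_le ⟨x', h', p', q', ⟨h2', hC'⟩, rfl⟩
    obtain ⟨hCp, hCq, hpq, hdisjpq⟩ := hC
    have hxh : x ≠ h := by
      intro hxh
      subst hxh
      exact hpq ((singleton_of_walk_self hacyc hCp).trans
        (singleton_of_walk_self hacyc hCq).symm)
    have hndp : p.Nodup := nodup_of_chain' hacyc hCp.1
    have hndq : q.Nodup := nodup_of_chain' hacyc hCq.1
    have hhp : h ∈ p := mem_last_of_walk hCp
    have hxmem : ∀ v, (v ∈ p ∨ v ∈ q) → v ≠ x → Relation.TransGen E x v := by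
      rintro v (hv | hv) hne
      · exact transGen_head_of_walk hCp hv hne
      · exact transGen_head_of_walk hCq hv hne
    -- second-to-last vertices of the merge paths
    have hsecond : ∀ l : List V, IsWalk E l x h → l.Nodup →
        ∃ u, (u, h) ∈ arcsOf l ∧ E u h ∧ (u = x → l = [x, h]) ∧
          (u ≠ x → u ∈ internals l) := by
      intro l hw hnd
      have hlne : l ≠ [] := by obtain ⟨tl, rfl⟩ := head_eq_of_walk hw; simp
      have hldec : l = l.dropLast ++ [h] := by
        have h0 := List.dropLast_append_getLast hlne
        have h1 := hw.2.2
        rw [List.getLast?_eq_getLast hlne] at h1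
        have h2 : l.getLast hlne = h := by injection h1
        rw [← h2]; exact h0.symm
      have hdne : l.dropLast ≠ [] := by
        intro hdl
        obtain ⟨tl, htl⟩ := head_eq_of_walk hw
        rw [hdl] at hldec
        simp at hldec
        rw [htl] at hldec
        simp at hldec
        exact hxh hldec.1
      obtain ⟨u, hudec⟩ : ∃ u, l.dropLast = l.dropLast.dropLast ++ [u] :=
        ⟨_, (List.dropLast_append_getLast hdne).symm⟩
      have hldec2 : l = l.dropLast.dropLast ++ u :: h :: [] := by
        conv_lhs => rw [hldec, hudec]
        simp
      have harc : (u, h) ∈ arcsOf l := mem_arcsOf_iff.mpr ⟨_, _, hldec2⟩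
      refine ⟨u, harc, rel_of_arc hw.1 harc, ?_, ?_⟩
      · intro hux
        subst hux
        cases hD : l.dropLast.dropLast with
        | nil => rw [hldec2, hD]; rfl
        | cons d₀ D' =>
          exfalso
          obtain ⟨tl, htl⟩ := head_eq_of_walk hw
          have hl2 : l = d₀ :: (D' ++ u :: h :: []) := by rw [hldec2, hD]; simp
          rw [htl] at hl2
          injection hl2 with h1 h2
          rw [htl] at hnd
          have hmem : u ∈ tl := by rw [h2]; simp
          exact (List.nodup_cons.mp hnd).1 hmem
      · intro hne2
        cases hD : l.dropLast.dropLast with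
        | nil =>
          exfalso
          obtain ⟨tl, htl⟩ := head_eq_of_walk hw
          have hl2 : l = [u, h] := by rw [hldec2, hD]; rfl
          rw [htl] at hl2
          injection hl2 with h1 h2
          exact hne2 h1.symm
        | cons d₀ D' =>
          have hl2 : l = d₀ :: (D' ++ u :: h :: []) := by rw [hldec2, hD]; simp
          have hdl : (D' ++ u :: h :: []).dropLast = D' ++ [u] := by
            rw [show D' ++ u :: h :: [] = (D' ++ [u]) ++ [h] by simp, List.dropLast_concat]
          show u ∈ l.tail.dropLast
          rw [hl2]
          simp only [List.tail_cons, hdl]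
          simp
    obtain ⟨u₁, hu₁arc, hu₁E, hu₁eq, hu₁int⟩ := hsecond p hCp hndp
    obtain ⟨u₂, hu₂arc, hu₂E, hu₂eq, hu₂int⟩ := hsecond q hCq hndq
    have hu12 : u₁ ≠ u₂ := by
      intro hu
      by_cases hux : u₁ = x
      · exact hpq ((hu₁eq hux).trans (hu₂eq (hu ▸ hux)).symm)
      · have h2x : u₂ ≠ x := fun hc => hux (hu.trans hc)
        exact hdisjpq u₁ (hu₁int hux) (by rw [hu]; exact hu₂int h2x)
    -- Fact F2: every in-arc of a vertex of the cycle (other than the split) is a cycle arc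
    have F2 : ∀ v, (v ∈ p ∨ v ∈ q) → v ≠ x → ∀ e, E e v →
        (e, v) ∈ arcsOf p ∨ (e, v) ∈ arcsOf q := by
      intro v hv hvx e he
      by_contra hno
      push_neg at hno
      by_cases hvh : v = h
      · subst hvh
        rcases parent_mem_pair (hin2 v) hu₁E hu₂E hu12 he with rfl | rfl
        · exact hno.1 hu₁arc
        · exact hno.2 hu₂arc
      · have hpred : ∃ pre, ((pre, v) ∈ arcsOf p ∨ (pre, v) ∈ arcsOf q) ∧ E pre v := by
          rcases hv with hv | hv
          · obtain ⟨pre, h1, h2⟩ := exists_pred hCp hv hvx; exact ⟨pre, Or.inl h1, h2⟩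
          · obtain ⟨pre, h1, h2⟩ := exists_pred hCq hv hvx; exact ⟨pre, Or.inr h1, h2⟩
        obtain ⟨pre, hprearc, hpreE⟩ := hpred
        have hprene : pre ≠ e := by
          intro hc; subst hc
          rcases hprearc with h1 | h1
          · exact hno.1 h1
          · exact hno.2 h1
        have h2v : 2 ≤ inDeg E v := two_le_inDeg_iff.mpr ⟨pre, e, hprene, hpreE, he⟩
        obtain ⟨xv, P, Q, -, hCv, harcP, -⟩ := exists_retCycle (S := (Set.univ : Set V))
          (fun _ _ _ _ => trivial) hprene hpreE he (Set.mem_univ r) (hroot pre) (hroot e)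
        have hdj := hnested x h p q xv v P Q h2 h2v ⟨hCp, hCq, hpq, hdisjpq⟩ hCv
          (by rintro ⟨-, rfl, -⟩; exact hvh rfl)
        refine hdj (pre, v) ?_ (List.mem_append.mpr (Or.inl harcP))
        rcases hprearc with h1 | h1
        · exact List.mem_append.mpr (Or.inl h1)
        · exact List.mem_append.mpr (Or.inr h1)
    -- the key freeness lemma below hanging subtrees
    have MAIN : ∀ y₀, (y₀ ∈ p ∨ y₀ ∈ q) → y₀ ≠ x → ∀ w, E y₀ w → w ∉ p → w ∉ q →
        ∀ t', Relation.ReflTransGen E w t' → inDeg E t' ≤ 1 := by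
      intro y₀ hy₀ hy₀x w hEw hwp hwq
      have hxw : Relation.TransGen E x w := (hxmem y₀ hy₀ hy₀x).tail hEw
      have F3 : ∀ t', Relation.ReflTransGen E w t' → t' ∉ p ∧ t' ∉ q := by
        intro t' hrt
        induction hrt with
        | refl => exact ⟨hwp, hwq⟩
        | @tail b c hab hbc ih =>
          have key : (c ∈ p ∨ c ∈ q) → False := by
            intro hcmem
            have hcx : c ≠ x := fun hceq =>
              hacyc x (Relation.TransGen.trans_left hxw (hceq ▸ (hab.tail hbc)))
            rcases F2 c hcmem hcx b hbc with h1 | h1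
            · exact ih.1 (mem_left_of_arc h1)
            · exact ih.2 (mem_left_of_arc h1)
          exact ⟨fun hc => key (Or.inl hc), fun hc => key (Or.inr hc)⟩
      intro t₀ hrt₀
      by_contra hdeg
      have h2t₀ : 2 ≤ inDeg E t₀ := by omega
      obtain ⟨t, ⟨hwt, h2t⟩, htop⟩ := (wf_transGen hacyc).has_min
        {u | Relation.ReflTransGen E w u ∧ 2 ≤ inDeg E u} ⟨t₀, hrt₀, h2t₀⟩
      have htp : t ∉ p ∧ t ∉ q := F3 t hwt
      have hth : t ≠ h := fun hc => htp.1 (hc ▸ hhp)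
      obtain ⟨c₁, hc₁E, hc₁prop⟩ : ∃ c₁, E c₁ t ∧
          ((c₁ = y₀ ∧ t = w) ∨ Relation.ReflTransGen E w c₁) := by
        rcases eq_or_ne t w with rfl | htw
        · exact ⟨y₀, hEw, Or.inl ⟨rfl, rfl⟩⟩
        · have htG : Relation.TransGen E w t := by
            rcases Relation.reflTransGen_iff_eq_or_transGen.mp hwt with h' | h'
            · exact absurd h' htw
            · exact h'
          obtain ⟨d, hd1, hd2⟩ := Relation.TransGen.tail'_iff.mp htG
          exact ⟨d, hd2, Or.inr hd1⟩
      obtain ⟨c₂, hc₂ne, hc₂E⟩ := exists_other_parent h2t hc₁E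
      obtain ⟨xt, P, Q, -, hCt, harcP, harcQ⟩ := exists_retCycle (S := (Set.univ : Set V))
        (fun _ _ _ _ => trivial) hc₂ne.symm hc₁E hc₂E (Set.mem_univ r) (hroot c₁) (hroot c₂)
      have hdjt := hnested x h p q xt t P Q h2 h2t ⟨hCp, hCq, hpq, hdisjpq⟩ hCt
        (by rintro ⟨-, rfl, -⟩; exact hth rfl)
      have hwP := hCt.1
      have hndP : P.Nodup := nodup_of_chain' hacyc hwP.1
      have htPm : t ∈ P := mem_last_of_walk hwP
      have hxt_meas : ¬ Relation.TransGen E x xt := by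
        intro hxxt
        have hsub : {u | Relation.ReflTransGen E xt u} ⊆ {u | Relation.ReflTransGen E x u} :=
          fun u hu => Relation.ReflTransGen.trans hxxt.to_reflTransGen hu
        have hxnot : x ∉ {u | Relation.ReflTransGen E xt u} := by
          intro hc
          exact hacyc x (Relation.TransGen.trans_left hxxt hc)
        have hss : {u | Relation.ReflTransGen E xt u} ⊂ {u | Relation.ReflTransGen E x u} :=
          ⟨hsub, fun hsup => hxnot (hsup (show x ∈ {u | Relation.ReflTransGen E x u} from
            Relation.ReflTransGen.refl))⟩
        have e1 : μ xt = {u | Relation.ReflTransGen E xt u}.ncard := by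
          rw [hμdef]; exact Nat.card_coe_set_eq _
        have e2 : μ x = {u | Relation.ReflTransGen E x u}.ncard := by
          rw [hμdef]; exact Nat.card_coe_set_eq _
        have hlt : μ xt < μ x := by
          rw [e1, e2]
          exact Set.ncard_lt_ncard hss (Set.toFinite _)
        have := hminμ xt t P Q h2t hCt
        omega
      have hy₀P : y₀ ∉ P := by
        intro hyP
        by_cases hyxt : y₀ = xt
        · exact hxt_meas (hyxt ▸ hxmem y₀ hy₀ hy₀x)
        · obtain ⟨e', he'arc, he'E⟩ := exists_pred hwP hyP hyxt
          rcases F2 y₀ hy₀ hy₀x e' he'E with h1 | h1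
          · exact hdjt (e', y₀) (List.mem_append.mpr (Or.inl h1))
              (List.mem_append.mpr (Or.inl he'arc))
          · exact hdjt (e', y₀) (List.mem_append.mpr (Or.inr h1))
              (List.mem_append.mpr (Or.inl he'arc))
      obtain ⟨l₁, z, l₂, hPdec, hBz, hl₁⟩ :=
        exists_first (B := fun v => Relation.ReflTransGen E w v) ⟨t, htPm, hwt⟩
      have hzt : Relation.ReflTransGen E z t := by
        have hwzl : IsWalk E (z :: l₂) z t := by
          rw [hPdec] at hwP; exact suffix_walk hwP
        exact reflTransGen_of_chain' hwzl.1 (mem_of_getLast? hwzl.2.2)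
      cases l₁ with
      | nil =>
        have hPz : P = z :: l₂ := by simpa using hPdec
        have hzxt : z = xt := by
          obtain ⟨tP, htPdec⟩ := head_eq_of_walk hwP
          rw [htPdec] at hPz
          injection hPz with h1 h2
          exact h1.symm
        exact hxt_meas (hzxt ▸ Relation.TransGen.trans_left hxw hBz)
      | cons a l₁' =>
        have hl₁ne : (a :: l₁' : List V) ≠ [] := by simp
        obtain ⟨e, hedec⟩ : ∃ e, a :: l₁' = (a :: l₁').dropLast ++ [e] :=
          ⟨_, (List.dropLast_append_getLast hl₁ne).symm⟩
        have hBe : ¬ Relation.ReflTransGen E w e := hl₁ e (by rw [hedec]; simp)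
        have hPdec2 : P = (a :: l₁').dropLast ++ e :: z :: l₂ := by
          rw [hPdec]
          conv_lhs => rw [hedec]
          simp
        have hearc : (e, z) ∈ arcsOf P := mem_arcsOf_iff.mpr ⟨_, _, hPdec2⟩
        have heE : E e z := rel_of_arc hwP.1 hearc
        have heP : e ∈ P := mem_left_of_arc hearc
        rcases eq_or_ne z t with rfl | hzt_ne
        · have hec₁ : e = c₁ := arc_pred_unique hndP hearc harcP
          rcases hc₁prop with ⟨hcy, -⟩ | hBc₁
          · exact hy₀P (by rw [← hcy, ← hec₁]; exact heP)
          · exact hBe (hec₁ ▸ hBc₁)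
        · have hTzt : Relation.TransGen E z t := by
            rcases Relation.reflTransGen_iff_eq_or_transGen.mp hzt with h' | h'
            · exact absurd h'.symm hzt_ne
            · exact h'
          rcases eq_or_ne z w with rfl | hzw
          · rcases eq_or_ne e y₀ with rfl | hey
            · exact hy₀P heP
            · exact htop z ⟨Relation.ReflTransGen.refl,
                two_le_inDeg_iff.mpr ⟨y₀, e, fun hc => hey hc.symm, hEw, heE⟩⟩ hTzt
          · have hTwz : Relation.TransGen E w z := by
              rcases Relation.reflTransGen_iff_eq_or_transGen.mp hBz with h' | h'
              · exact absurd h' hzw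
              · exact h'
            obtain ⟨dz, hdz1, hdz2⟩ := Relation.TransGen.tail'_iff.mp hTwz
            have hedz : e ≠ dz := fun hc => hBe (hc ▸ hdz1)
            exact htop z ⟨hBz, two_le_inDeg_iff.mpr ⟨e, dz, hedz, heE, hdz2⟩⟩ hTzt
    -- assemble the conclusion
    refine ⟨h, x, p, q, h2, ⟨hCp, hCq, hpq, hdisjpq⟩, ?_, ?_⟩
    · intro w hw
      have hTxh : Relation.TransGen E x h := hxmem h (Or.inl hhp) (Ne.symm hxh)
      have hwnot : w ∉ p ∧ w ∉ q := by
        have key : (w ∈ p ∨ w ∈ q) → False := by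
          intro hwmem
          have hwx : w ≠ x := fun hweq => hacyc x (hTxh.tail (hweq ▸ hw))
          rcases F2 w hwmem hwx h hw with h1 | h1
          · exact arc_src_ne_last hndp h1 hCp.2.2 rfl
          · exact arc_src_ne_last hndq h1 hCq.2.2 rfl
        exact ⟨fun hc => key (Or.inl hc), fun hc => key (Or.inr hc)⟩
      have hfree := MAIN h (Or.inl hhp) (Ne.symm hxh) w hw hwnot.1 hwnot.2
      refine ⟨?_, hfree w Relation.ReflTransGen.refl⟩
      by_contra h0
      obtain ⟨w', hw'⟩ := exists_succ_of_outDeg_ne_zero h0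
      obtain ⟨u, hu1, hu2⟩ := Hesc' w ⟨w', hw'⟩
      have := hfree u hu1
      omega
    · intro y hy w hEyw hwp hwq
      have hymem : y ∈ p ∨ y ∈ q := by
        rcases hy with hy | hy
        · exact Or.inl (List.mem_of_mem_tail ((List.dropLast_sublist _).subset hy))
        · exact Or.inr (List.mem_of_mem_tail ((List.dropLast_sublist _).subset hy))
      have hyx : y ≠ x := by
        rcases hy with hy | hy
        · intro hyeq
          subst hyeq
          have hyt : y ∈ p.tail := (List.dropLast_sublist _).subset hy
          obtain ⟨tp, htp⟩ := head_eq_of_walk hCp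
          rw [htp] at hyt hndp
          simp at hyt
          exact (List.nodup_cons.mp hndp).1 hyt
        · intro hyeq
          subst hyeq
          have hyt : y ∈ q.tail := (List.dropLast_sublist _).subset hy
          obtain ⟨tq, htq⟩ := head_eq_of_walk hCq
          rw [htq] at hyt hndq
          simp at hyt
          exact (List.nodup_cons.mp hndq).1 hyt
      have hfree := MAIN y hymem hyx w hEyw hwp hwq
      refine ⟨?_, hfree w Relation.ReflTransGen.refl⟩
      by_contra h0
      obtain ⟨w', hw'⟩ := exists_succ_of_outDeg_ne_zero h0
      obtain ⟨u, hu1, hu2⟩ := Hesc' w ⟨w', hw'⟩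
      have := hfree u hu1
      omega
end Part2
end
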